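/- arXiv:2204.01938 — 10 statements merged into one kernel-verified Lean document; each statement's English description precedes it below -/
import Mathlib

section
/- For any digraph G, τ*(G) ≤ τ(G) ≤ 3τ*(G), where τ(G) = max over all subsets A, B ⊆ V of e(A,B) − e(B,A), and τ*(G) is the same maximum restricted to disjoint pairs A, B. -/
open Finset

section FASDefs

variable {V : Type*} [Fintype V] [DecidableEq V]

/-- Existence of a directed cycle of length `l` in the digraph with edge relation `E`. -/
def hasDirCycleLen (E : V → V → Prop) (l : ℕ) : Prop :=
  ∃ (hl : 0 < l) (v : Fin l → V),
    ∀ i : Fin l, E (v i) (v ⟨(i.1 + 1) % l, Nat.mod_lt _ hl⟩)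

/-- Existence of a directed cycle (of any length). -/
def hasDirCycle (E : V → V → Prop) : Prop := ∃ l : ℕ, hasDirCycleLen E l

/-- `S` is a feedback arc set of the digraph with edge relation `E`. -/
def IsFAS (E : V → V → Prop) (S : Finset (V × V)) : Prop :=
  (∀ e ∈ S, E e.1 e.2) ∧ ¬ hasDirCycle (fun a b => E a b ∧ (a, b) ∉ S)

/-- `beta E` is the minimum size of a feedback arc set. -/
noncomputable def beta (E : V → V → Prop) : ℕ :=
  sInf {k | ∃ S : Finset (V × V), IsFAS E S ∧ S.card = k}

/-- Number of directed edges. -/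
def edgeCount (E : V → V → Prop) [DecidableRel E] : ℕ :=
  ((univ : Finset (V × V)).filter (fun p => E p.1 p.2)).card

/-- `eAB E A B` is the number of directed edges from `A` to `B`. -/
def eAB (E : V → V → Prop) [DecidableRel E] (A B : Finset V) : ℕ :=
  ((A ×ˢ B).filter (fun p => E p.1 p.2)).card

/-- Directional discrepancy `τ(G)`: max of `e(A,B) - e(B,A)` over all pairs of subsets. -/
noncomputable def tau (E : V → V → Prop) [DecidableRel E] : ℤ :=
  Finset.sup' (univ : Finset (Finset V × Finset V)) ⟨(∅, ∅), mem_univ _⟩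
    fun AB => (eAB E AB.1 AB.2 : ℤ) - (eAB E AB.2 AB.1 : ℤ)

/-- `τ*(G)`: max of `e(A,B) - e(B,A)` over disjoint pairs of subsets. -/
noncomputable def tauStar (E : V → V → Prop) [DecidableRel E] : ℤ :=
  Finset.sup' ((univ : Finset (Finset V × Finset V)).filter fun AB => Disjoint AB.1 AB.2)
    ⟨(∅, ∅), by simp⟩
    fun AB => (eAB E AB.1 AB.2 : ℤ) - (eAB E AB.2 AB.1 : ℤ)

/-- `τ_⊔(G)`: max of `e(A,B) - e(B,A)` over partitions `V = A ⊔ B`. -/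
noncomputable def tauPart (E : V → V → Prop) [DecidableRel E] : ℤ :=
  Finset.sup' (univ : Finset (Finset V)) ⟨∅, mem_univ _⟩
    fun A => (eAB E A Aᶜ : ℤ) - (eAB E Aᶜ A : ℤ)

/-- Directed surplus `π(G) = m/2 - β(G)`. -/
noncomputable def surplus (E : V → V → Prop) [DecidableRel E] : ℝ :=
  (edgeCount E : ℝ) / 2 - (beta E : ℝ)

/-- Indegree `d⁺(v)`. -/
def inDeg (E : V → V → Prop) [DecidableRel E] (v : V) : ℕ :=
  (univ.filter fun w => E w v).card

/-- Outdegree `d⁻(v)`. -/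
def outDeg (E : V → V → Prop) [DecidableRel E] (v : V) : ℕ :=
  (univ.filter fun w => E v w).card

end FASDefs

/-- Number of labeled copies of the digraph `(W, EB)` in the digraph `(V, E)`:
injective maps preserving directed edges. -/
noncomputable def NL {W V : Type*} (EB : W → W → Prop) (E : V → V → Prop) : ℕ :=
  Nat.card {f : W ↪ V // ∀ a b, EB a b → E (f a) (f b)}

section Aux

variable {V : Type*} [Fintype V] [DecidableEq V] (E : V → V → Prop) [DecidableRel E]

lemma eAB_union_left {A B : Finset V} (C : Finset V) (h : Disjoint A B) :
    eAB E (A ∪ B) C = eAB E A C + eAB E B C := by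
  unfold eAB
  rw [Finset.union_product, Finset.filter_union, Finset.card_union_of_disjoint]
  apply Finset.disjoint_filter_filter
  rw [Finset.disjoint_left]
  rintro ⟨a, b⟩ ha hb
  simp only [Finset.mem_product] at ha hb
  exact (Finset.disjoint_left.mp h ha.1) hb.1

lemma eAB_union_right {A B : Finset V} (C : Finset V) (h : Disjoint A B) :
    eAB E C (A ∪ B) = eAB E C A + eAB E C B := by
  unfold eAB
  rw [Finset.product_union, Finset.filter_union, Finset.card_union_of_disjoint]
  apply Finset.disjoint_filter_filter
  rw [Finset.disjoint_left]
  rintro ⟨a, b⟩ ha hb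
  simp only [Finset.mem_product] at ha hb
  exact (Finset.disjoint_left.mp h ha.2) hb.2

lemma tauStar_ge {A B : Finset V} (h : Disjoint A B) :
    (eAB E A B : ℤ) - eAB E B A ≤ tauStar E :=
  Finset.le_sup' (f := fun AB : Finset V × Finset V =>
      (eAB E AB.1 AB.2 : ℤ) - (eAB E AB.2 AB.1 : ℤ))
    (Finset.mem_filter.mpr ⟨Finset.mem_univ (A, B), h⟩)

end Aux

/-- `τ*(G) ≤ τ(G) ≤ 3 τ*(G)`. -/
theorem stmt1 {V : Type*} [Fintype V] [DecidableEq V] (E : V → V → Prop) [DecidableRel E] :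
    tauStar E ≤ tau E ∧ tau E ≤ 3 * tauStar E := by
  constructor
  · apply Finset.sup'_le
    intro AB _
    exact Finset.le_sup' (fun AB : Finset V × Finset V =>
      (eAB E AB.1 AB.2 : ℤ) - (eAB E AB.2 AB.1 : ℤ)) (Finset.mem_univ AB)
  · apply Finset.sup'_le
    rintro ⟨A, B⟩ -
    set C := A ∩ B with hC
    set A' := A \ B with hA'
    set B' := B \ A with hB'
    have hA : A = A' ∪ C := by rw [hA', hC]; simp [Finset.sdiff_union_inter]
    have hB : B = B' ∪ C := by
      rw [hB', hC, Finset.inter_comm]; simp [Finset.sdiff_union_inter]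
    have d1 : Disjoint A' C := Finset.disjoint_sdiff_inter A B
    have d2 : Disjoint B' C := by
      rw [hB', hC, Finset.inter_comm]; exact Finset.disjoint_sdiff_inter B A
    have d3 : Disjoint A' B' := sdiff_disjoint.mono_right Finset.sdiff_subset
    have key : (eAB E A B : ℤ) - eAB E B A =
        ((eAB E A' B' : ℤ) - eAB E B' A') +
        (((eAB E A' C : ℤ) - eAB E C A') +
         ((eAB E C B' : ℤ) - eAB E B' C)) := by
      rw [hA, hB]
      rw [eAB_union_left E _ d1, eAB_union_left E _ d2,
        eAB_union_right E _ d2, eAB_union_right E _ d2,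
        eAB_union_right E _ d1, eAB_union_right E _ d1]
      push_cast
      ring
    rw [key]
    have t1 := tauStar_ge E d3
    have t2 := tauStar_ge E d1
    have t3 := tauStar_ge E d2.symm
    linarith
end

section
/- If B and B′ are digraphs with the same underlying undirected graph on k vertices, B has e(B) edges, and G is a digraph on n vertices, then |N_L(B, G) − N_L(B′, G)| ≤ e(B) · n^{k−2} · τ(G). -/
open Finset

section TauAux

variable {W V : Type*} [Fintype W] [DecidableEq W] [Fintype V] [DecidableEq V]

lemma le_tau_pair (E : V → V → Prop) [DecidableRel E] (A B : Finset V) :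
    (eAB E A B : ℤ) - (eAB E B A : ℤ) ≤ tau E := by
  have h := Finset.le_sup' (s := (univ : Finset (Finset V × Finset V)))
    (fun AB => (eAB E AB.1 AB.2 : ℤ) - (eAB E AB.2 AB.1 : ℤ)) (mem_univ (A, B))
  rw [tau]
  convert h using 2

lemma tau_nonneg (E : V → V → Prop) [DecidableRel E] : 0 ≤ tau E := by
  have := le_tau_pair E (∅ : Finset V) ∅
  simpa using this

lemma filter_swap_card (E : V → V → Prop) [DecidableRel E] (A B : Finset V) :
    ((A ×ˢ B).filter fun p => E p.2 p.1).card = eAB E B A := by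
  unfold eAB
  apply Finset.card_bij (fun p _ => (p.2, p.1))
  · intro p hp
    simp only [Finset.mem_filter, Finset.mem_product] at hp ⊢
    exact ⟨⟨hp.1.2, hp.1.1⟩, hp.2⟩
  · intro p hp q hq h
    exact Prod.ext (congrArg Prod.snd h) (congrArg Prod.fst h)
  · intro p hp
    simp only [Finset.mem_filter, Finset.mem_product] at hp
    refine ⟨(p.2, p.1), ?_, rfl⟩
    simp only [Finset.mem_filter, Finset.mem_product]
    exact ⟨⟨hp.1.2, hp.1.1⟩, hp.2⟩

lemma card_oth_fun (u v : W) (huv : u ≠ v) :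
    (Fintype.card ({w : W // w ≠ u ∧ w ≠ v} → V)) = Fintype.card V ^ (Fintype.card W - 2) := by
  rw [Fintype.card_fun]
  congr 1
  rw [Fintype.card_subtype]
  have h1 : (univ.filter fun w : W => w ≠ u ∧ w ≠ v) = ({u, v} : Finset W)ᶜ := by
    ext w; simp [not_or]
  rw [h1, Finset.card_compl, Finset.card_pair huv]

end TauAux

section FlipAux

variable {W V : Type*} [Fintype W] [DecidableEq W] [Fintype V] [DecidableEq V]
variable (F : W → W → Prop) [DecidableRel F] (E : V → V → Prop) [DecidableRel E] (u v : W)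

/-- vertices other than `u, v` -/
abbrev Oth (u v : W) := {w : W // w ≠ u ∧ w ≠ v}

def Tset : Finset (W → V) :=
  univ.filter fun f => Function.Injective f ∧ ∀ a b, F a b → E (f a) (f b)

def Aset (g : Oth u v → V) : Finset V :=
  univ.filter fun x =>
    (Function.Injective g ∧ ∀ a b : Oth u v, F a.1 b.1 → E (g a) (g b)) ∧
    (∀ s : Oth u v, g s ≠ x) ∧
    (∀ s : Oth u v, F u s.1 → E x (g s)) ∧ (∀ s : Oth u v, F s.1 u → E (g s) x)

def Bset (g : Oth u v → V) : Finset V :=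
  univ.filter fun y =>
    (∀ s : Oth u v, g s ≠ y) ∧
    (∀ s : Oth u v, F v s.1 → E y (g s)) ∧ (∀ s : Oth u v, F s.1 v → E (g s) y)

lemma NL_or_eq (p q : W) :
    NL (fun a b => F a b ∨ (a, b) = (p, q)) E
      = ((Tset F E).filter fun f => E (f p) (f q)).card := by
  have e : {f : W ↪ V // ∀ a b, (F a b ∨ (a, b) = (p, q)) → E (f a) (f b)} ≃
      {f : W → V // f ∈ (Tset F E).filter fun f => E (f p) (f q)} :=
    { toFun := fun f => ⟨f.1, by
        simp only [Tset, Finset.mem_filter, Finset.mem_univ, true_and]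
        exact ⟨⟨f.1.injective, fun a b h => f.2 a b (Or.inl h)⟩, f.2 p q (Or.inr rfl)⟩⟩
      invFun := fun f => ⟨⟨f.1, by
          have := f.2
          simp only [Tset, Finset.mem_filter, Finset.mem_univ, true_and] at this
          exact this.1.1⟩, by
        have hf := f.2
        simp only [Tset, Finset.mem_filter, Finset.mem_univ, true_and] at hf
        rintro a b (h | h)
        · exact hf.1.2 a b h
        · obtain ⟨ha, hb⟩ := Prod.mk.injEq .. ▸ h
          subst ha; subst hb
          exact hf.2⟩
      left_inv := fun f => rfl
      right_inv := fun f => rfl }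
  rw [NL, Nat.card_congr e, Nat.card_eq_fintype_card, Fintype.card_coe]

end FlipAux

section FlipAux2

variable {W V : Type*} [Fintype W] [DecidableEq W] [Fintype V] [DecidableEq V]
variable (F : W → W → Prop) [DecidableRel F] (E : V → V → Prop) [DecidableRel E] (u v : W)

lemma fiber_card (hFu : ¬ F u u) (hFv : ¬ F v v) (hFuv : ¬ F u v) (hFvu : ¬ F v u)
    (huv : u ≠ v) (g : Oth u v → V) (R : V → V → Prop) [DecidableRel R]
    (hR : ∀ x y, R x y → x ≠ y) :
    (((Tset F E).filter fun f => R (f u) (f v)).filter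
        fun f => (fun s : Oth u v => f s.1) = g).card
      = ((Aset F E u v g ×ˢ Bset F E u v g).filter fun p => R p.1 p.2).card := by
  apply Finset.card_bij (fun f _ => (f u, f v))
  · intro f hf
    simp only [Tset, Finset.mem_filter, Finset.mem_univ, true_and] at hf
    obtain ⟨⟨⟨hinj, hhom⟩, hRf⟩, hg⟩ := hf
    subst hg
    simp only [Finset.mem_filter, Finset.mem_product, Aset, Bset, Finset.mem_univ, true_and]
    refine ⟨⟨⟨⟨?_, ?_⟩, ?_, ?_, ?_⟩, ?_, ?_, ?_⟩, hRf⟩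
    · intro a b h; exact Subtype.ext (hinj h)
    · intro a b h; exact hhom _ _ h
    · intro s h; exact s.2.1 (hinj h)
    · intro s h; exact hhom _ _ h
    · intro s h; exact hhom _ _ h
    · intro s h; exact s.2.2 (hinj h)
    · intro s h; exact hhom _ _ h
    · intro s h; exact hhom _ _ h
  · intro f hf f' hf' h
    simp only [Finset.mem_filter] at hf hf'
    have h1 : f u = f' u := congrArg Prod.fst h
    have h2 : f v = f' v := congrArg Prod.snd h
    funext w
    by_cases hwu : w = u
    · rw [hwu]; exact h1
    by_cases hwv : w = v
    · rw [hwv]; exact h2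
    exact congrFun (hf.2.trans hf'.2.symm) ⟨w, hwu, hwv⟩
  · rintro ⟨x, y⟩ hp
    simp only [Finset.mem_filter, Finset.mem_product, Aset, Bset, Finset.mem_univ,
      true_and] at hp
    obtain ⟨⟨⟨⟨hginj, hghom⟩, hgx, hux1, hux2⟩, hgy, hvy1, hvy2⟩, hRxy⟩ := hp
    have hxy : x ≠ y := hR x y hRxy
    set f : W → V := fun w => if hu : w = u then x else if hv : w = v then y
      else g ⟨w, hu, hv⟩ with hfdef
    have hfu : f u = x := by simp [hfdef]
    have hfv : f v = y := by rw [hfdef]; simp only [dif_neg (Ne.symm huv)]; simp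
    have hfs : ∀ s : Oth u v, f s.1 = g s := by
      intro s; rw [hfdef]; simp only [dif_neg s.2.1, dif_neg s.2.2]
    refine ⟨f, ?_, ?_⟩
    · simp only [Tset, Finset.mem_filter, Finset.mem_univ, true_and]
      refine ⟨⟨⟨?_, ?_⟩, ?_⟩, ?_⟩
      · -- injectivity of f
        intro a b hab
        by_cases ha : a = u
        · by_cases hb : b = u
          · rw [ha, hb]
          by_cases hb' : b = v
          · rw [ha, hb', hfu, hfv] at hab; exact absurd hab hxy
          · rw [ha, hfu, hfs ⟨b, hb, hb'⟩] at hab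
            exact absurd hab.symm (hgx ⟨b, hb, hb'⟩)
        by_cases ha' : a = v
        · by_cases hb : b = u
          · rw [ha', hb, hfv, hfu] at hab; exact absurd hab.symm hxy
          by_cases hb' : b = v
          · rw [ha', hb']
          · rw [ha', hfv, hfs ⟨b, hb, hb'⟩] at hab
            exact absurd hab.symm (hgy ⟨b, hb, hb'⟩)
        · by_cases hb : b = u
          · rw [hb, hfu, hfs ⟨a, ha, ha'⟩] at hab
            exact absurd hab (hgx ⟨a, ha, ha'⟩)
          by_cases hb' : b = v
          · rw [hb', hfv, hfs ⟨a, ha, ha'⟩] at hab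
            exact absurd hab (hgy ⟨a, ha, ha'⟩)
          · rw [hfs ⟨a, ha, ha'⟩, hfs ⟨b, hb, hb'⟩] at hab
            exact congrArg Subtype.val (hginj hab)
      · -- homomorphism on F
        intro a b hFab
        by_cases ha : a = u
        · by_cases hb : b = u
          · rw [ha, hb] at hFab; exact absurd hFab hFu
          by_cases hb' : b = v
          · rw [ha, hb'] at hFab; exact absurd hFab hFuv
          · rw [ha] at hFab ⊢
            rw [hfu, hfs ⟨b, hb, hb'⟩]; exact hux1 ⟨b, hb, hb'⟩ hFab
        by_cases ha' : a = v
        · by_cases hb : b = u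
          · rw [ha', hb] at hFab; exact absurd hFab hFvu
          by_cases hb' : b = v
          · rw [ha', hb'] at hFab; exact absurd hFab hFv
          · rw [ha'] at hFab ⊢
            rw [hfv, hfs ⟨b, hb, hb'⟩]; exact hvy1 ⟨b, hb, hb'⟩ hFab
        · by_cases hb : b = u
          · rw [hb] at hFab ⊢
            rw [hfu, hfs ⟨a, ha, ha'⟩]; exact hux2 ⟨a, ha, ha'⟩ hFab
          by_cases hb' : b = v
          · rw [hb'] at hFab ⊢
            rw [hfv, hfs ⟨a, ha, ha'⟩]; exact hvy2 ⟨a, ha, ha'⟩ hFab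
          · rw [hfs ⟨a, ha, ha'⟩, hfs ⟨b, hb, hb'⟩]
            exact hghom ⟨a, ha, ha'⟩ ⟨b, hb, hb'⟩ hFab
      · rw [hfu, hfv]; exact hRxy
      · funext s; exact hfs s
    · rw [hfu, hfv]

end FlipAux2

section FlipAux3

variable {W V : Type*} [Fintype W] [DecidableEq W] [Fintype V] [DecidableEq V]

lemma flip_bound (F : W → W → Prop) [DecidableRel F] (E : V → V → Prop) [DecidableRel E] (u v : W)
    (hirr : ∀ a, ¬ E a a) (huv : u ≠ v)
    (hFu : ¬ F u u) (hFv : ¬ F v v) (hFuv : ¬ F u v) (hFvu : ¬ F v u) :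
    |(NL (fun a b => F a b ∨ (a, b) = (u, v)) E : ℤ) -
      (NL (fun a b => F a b ∨ (a, b) = (v, u)) E : ℤ)|
      ≤ (Fintype.card V : ℤ) ^ (Fintype.card W - 2) * tau E := by
  classical
  have hE : ∀ x y : V, E x y → x ≠ y := by
    rintro x y hxy rfl; exact hirr x hxy
  have hE' : ∀ x y : V, E y x → x ≠ y := by
    rintro x y hxy rfl; exact hirr x hxy
  have h1 : NL (fun a b => F a b ∨ (a, b) = (u, v)) E
      = ∑ g : Oth u v → V, eAB E (Aset F E u v g) (Bset F E u v g) := by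
    rw [NL_or_eq F E u v]
    rw [Finset.card_eq_sum_card_fiberwise
      (f := fun f : W → V => fun s : Oth u v => f s.1) (t := univ) (fun f _ => mem_univ _)]
    refine Finset.sum_congr rfl fun g _ => ?_
    rw [fiber_card F E u v hFu hFv hFuv hFvu huv g E hE]
    rfl
  have h2 : NL (fun a b => F a b ∨ (a, b) = (v, u)) E
      = ∑ g : Oth u v → V, eAB E (Bset F E u v g) (Aset F E u v g) := by
    rw [NL_or_eq F E v u]
    rw [Finset.card_eq_sum_card_fiberwise
      (f := fun f : W → V => fun s : Oth u v => f s.1) (t := univ) (fun f _ => mem_univ _)]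
    refine Finset.sum_congr rfl fun g _ => ?_
    letI hd : DecidableRel (fun x y : V => E y x) := fun x y => ‹DecidableRel E› y x
    exact (fiber_card F E u v hFu hFv hFuv hFvu huv g (fun x y => E y x) hE').trans
      (filter_swap_card E _ _)
  rw [h1, h2]
  push_cast
  rw [← Finset.sum_sub_distrib]
  calc |∑ g : Oth u v → V,
        ((eAB E (Aset F E u v g) (Bset F E u v g) : ℤ)
          - (eAB E (Bset F E u v g) (Aset F E u v g) : ℤ))|
      ≤ ∑ g : Oth u v → V,
        |((eAB E (Aset F E u v g) (Bset F E u v g) : ℤ)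
          - (eAB E (Bset F E u v g) (Aset F E u v g) : ℤ))| :=
        Finset.abs_sum_le_sum_abs _ _
    _ ≤ ∑ _g : Oth u v → V, tau E := by
        refine Finset.sum_le_sum fun g _ => ?_
        rw [abs_le]
        constructor
        · have := le_tau_pair E (Bset F E u v g) (Aset F E u v g); linarith
        · exact le_tau_pair E _ _
    _ = (Fintype.card (Oth u v → V) : ℤ) * tau E := by
        rw [Finset.sum_const, Finset.card_univ, nsmul_eq_mul]
    _ = (Fintype.card V : ℤ) ^ (Fintype.card W - 2) * tau E := by
        rw [card_oth_fun u v huv]; push_cast; ring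

end FlipAux3

section MainInd

open scoped Classical

variable {W V : Type*} [Fintype W] [DecidableEq W] [Fintype V] [DecidableEq V]

lemma NL_congr (X Y : W → W → Prop) (E : V → V → Prop) (h : ∀ a b, X a b ↔ Y a b) :
    NL X E = NL Y E := by
  have hXY : X = Y := funext fun a => funext fun b => propext (h a b)
  rw [hXY]

lemma main_ind (E : V → V → Prop) [DecidableRel E] (hirr : ∀ a, ¬ E a a)
    (EB' : W → W → Prop) (horB' : ∀ a b, ¬ (EB' a b ∧ EB' b a)) :
    ∀ (d : ℕ) (EB : W → W → Prop), (∀ a, ¬ EB a a) → (∀ a b, ¬ (EB a b ∧ EB b a)) →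
      (∀ a b, (EB a b ∨ EB b a) ↔ (EB' a b ∨ EB' b a)) →
      ((univ : Finset (W × W)).filter fun p => EB p.1 p.2 ∧ ¬ EB' p.1 p.2).card = d →
      |(NL EB E : ℤ) - (NL EB' E : ℤ)|
        ≤ (d : ℤ) * ((Fintype.card V : ℤ) ^ (Fintype.card W - 2) * tau E) := by
  intro d
  induction d with
  | zero =>
    intro EB hirrB horB hsame hcard
    have hEmpty := Finset.card_eq_zero.mp hcard
    have hsub : ∀ a b, EB a b → EB' a b := by
      intro a b hab
      by_contra hnot
      have hm : ((a, b) : W × W)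
          ∈ (univ.filter fun p : W × W => EB p.1 p.2 ∧ ¬ EB' p.1 p.2) := by
        simp only [Finset.mem_filter, Finset.mem_univ, true_and]
        exact ⟨hab, hnot⟩
      rw [hEmpty] at hm
      exact absurd hm (Finset.notMem_empty _)
    have heq : ∀ a b, EB a b ↔ EB' a b := by
      intro a b
      refine ⟨hsub a b, fun h' => ?_⟩
      rcases (hsame a b).2 (Or.inl h') with h | h
      · exact h
      · exact absurd ⟨hsub b a h, h'⟩ (horB' b a)
    rw [NL_congr EB EB' E heq]
    simp
  | succ d ih =>
    intro EB hirrB horB hsame hcard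
    have hne : (univ.filter fun p : W × W => EB p.1 p.2 ∧ ¬ EB' p.1 p.2).Nonempty := by
      rw [← Finset.card_pos, hcard]; exact Nat.succ_pos d
    obtain ⟨⟨u, v⟩, huv_mem⟩ := hne
    have hEuv : EB u v := (Finset.mem_filter.mp huv_mem).2.1
    have hnot' : ¬ EB' u v := (Finset.mem_filter.mp huv_mem).2.2
    have hvu' : EB' v u := ((hsame u v).1 (Or.inl hEuv)).resolve_left hnot'
    have huvne : u ≠ v := fun h => hirrB u (h ▸ hEuv)
    have hEvu : ¬ EB v u := fun h => horB u v ⟨hEuv, h⟩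
    set EB'' : W → W → Prop :=
      fun a b => (EB a b ∧ ¬((a, b) = (u, v))) ∨ (a, b) = (v, u) with hEB''
    have hirr'' : ∀ a, ¬ EB'' a a := by
      rintro a (⟨h, _⟩ | h)
      · exact hirrB a h
      · have h1 : a = v := congrArg Prod.fst h
        have h2 : a = u := congrArg Prod.snd h
        exact huvne (h2.symm.trans h1)
    have hor'' : ∀ a b, ¬ (EB'' a b ∧ EB'' b a) := by
      rintro a b ⟨(⟨h1, hn1⟩ | hp1), (⟨h2, hn2⟩ | hp2)⟩
      · exact horB a b ⟨h1, h2⟩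
      · have ha : a = u := congrArg Prod.snd hp2
        have hb : b = v := congrArg Prod.fst hp2
        exact hn1 (by rw [ha, hb])
      · have ha : a = v := congrArg Prod.fst hp1
        have hb : b = u := congrArg Prod.snd hp1
        exact hn2 (by rw [ha, hb])
      · have ha : a = v := congrArg Prod.fst hp1
        have ha' : a = u := congrArg Prod.snd hp2
        exact huvne (ha'.symm.trans ha)
    have hund : ∀ a b, (EB'' a b ∨ EB'' b a) ↔ (EB a b ∨ EB b a) := by
      intro a b
      constructor
      · rintro ((⟨h, _⟩ | hp) | (⟨h, _⟩ | hp))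
        · exact Or.inl h
        · have ha : a = v := congrArg Prod.fst hp
          have hb : b = u := congrArg Prod.snd hp
          exact Or.inr (by rw [ha, hb]; exact hEuv)
        · exact Or.inr h
        · have hb : b = v := congrArg Prod.fst hp
          have ha : a = u := congrArg Prod.snd hp
          exact Or.inl (by rw [ha, hb]; exact hEuv)
      · rintro (h | h)
        · by_cases hc : (a, b) = (u, v)
          · have ha : a = u := congrArg Prod.fst hc
            have hb : b = v := congrArg Prod.snd hc
            exact Or.inr (Or.inr (by rw [ha, hb]))
          · exact Or.inl (Or.inl ⟨h, hc⟩)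
        · by_cases hc : (b, a) = (u, v)
          · have hb : b = u := congrArg Prod.fst hc
            have ha : a = v := congrArg Prod.snd hc
            exact Or.inl (Or.inr (by rw [ha, hb]))
          · exact Or.inr (Or.inl ⟨h, hc⟩)
    have hsame'' : ∀ a b, (EB'' a b ∨ EB'' b a) ↔ (EB' a b ∨ EB' b a) :=
      fun a b => (hund a b).trans (hsame a b)
    have hDcard : (univ.filter fun p : W × W => EB'' p.1 p.2 ∧ ¬ EB' p.1 p.2).card = d := by
      have hset : (univ.filter fun p : W × W => EB'' p.1 p.2 ∧ ¬ EB' p.1 p.2)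
          = (univ.filter fun p : W × W => EB p.1 p.2 ∧ ¬ EB' p.1 p.2).erase (u, v) := by
        ext ⟨a, b⟩
        simp only [Finset.mem_erase, Finset.mem_filter, Finset.mem_univ, true_and]
        constructor
        · rintro ⟨(⟨h, hn⟩ | hp), hn'⟩
          · exact ⟨hn, h, hn'⟩
          · have ha : a = v := congrArg Prod.fst hp
            have hb : b = u := congrArg Prod.snd hp
            exact absurd (by rw [ha, hb]; exact hvu') hn'
        · rintro ⟨hne', h, hn'⟩
          exact ⟨Or.inl ⟨h, hne'⟩, hn'⟩
      rw [hset, Finset.card_erase_of_mem huv_mem, hcard]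
      omega
    have hflip : |(NL EB E : ℤ) - (NL EB'' E : ℤ)|
        ≤ (Fintype.card V : ℤ) ^ (Fintype.card W - 2) * tau E := by
      have h1 : NL EB E
          = NL (fun a b => (EB a b ∧ ¬((a, b) = (u, v))) ∨ (a, b) = (u, v)) E := by
        apply NL_congr
        intro a b
        constructor
        · intro h
          by_cases hc : (a, b) = (u, v)
          · exact Or.inr hc
          · exact Or.inl ⟨h, hc⟩
        · rintro (⟨h, _⟩ | hc)
          · exact h
          · have ha : a = u := congrArg Prod.fst hc
            have hb : b = v := congrArg Prod.snd hc
            rw [ha, hb]; exact hEuv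
      have h2 : NL EB'' E
          = NL (fun a b => (EB a b ∧ ¬((a, b) = (u, v))) ∨ (a, b) = (v, u)) E := rfl
      rw [h1, h2]
      apply flip_bound (fun a b => EB a b ∧ ¬((a, b) = (u, v))) E u v hirr huvne
      · rintro ⟨h, _⟩; exact hirrB u h
      · rintro ⟨h, _⟩; exact hirrB v h
      · rintro ⟨_, h⟩; exact h rfl
      · rintro ⟨h, _⟩; exact hEvu h
    have hih : |(NL EB'' E : ℤ) - (NL EB' E : ℤ)|
        ≤ (d : ℤ) * ((Fintype.card V : ℤ) ^ (Fintype.card W - 2) * tau E) := by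
      refine ih EB'' hirr'' hor'' hsame'' ?_
      convert hDcard using 2
      ext p
      simp only [Finset.mem_filter]
    calc |(NL EB E : ℤ) - (NL EB' E : ℤ)|
        ≤ |(NL EB E : ℤ) - (NL EB'' E : ℤ)| + |(NL EB'' E : ℤ) - (NL EB' E : ℤ)| :=
          abs_sub_le _ _ _
      _ ≤ (Fintype.card V : ℤ) ^ (Fintype.card W - 2) * tau E
            + (d : ℤ) * ((Fintype.card V : ℤ) ^ (Fintype.card W - 2) * tau E) :=
          add_le_add hflip hih
      _ = ((d + 1 : ℕ) : ℤ) * ((Fintype.card V : ℤ) ^ (Fintype.card W - 2) * tau E) := by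
          push_cast; ring

end MainInd

/-- if `B, B'` are digraphs with the same underlying undirected graph on `k`
vertices, then `|N_L(B,G) - N_L(B',G)| ≤ e(B) · n^(k-2) · τ(G)`. -/
theorem stmt6 {W V : Type*} [Fintype W] [DecidableEq W] [Fintype V] [DecidableEq V]
    (EB EB' : W → W → Prop) [DecidableRel EB] (E : V → V → Prop) [DecidableRel E]
    (hsame : ∀ a b, (EB a b ∨ EB b a) ↔ (EB' a b ∨ EB' b a))
    (hirrB : ∀ a, ¬ EB a a) (horB : ∀ a b, ¬ (EB a b ∧ EB b a))
    (hirrB' : ∀ a, ¬ EB' a a) (horB' : ∀ a b, ¬ (EB' a b ∧ EB' b a))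
    (hirr : ∀ a, ¬ E a a) (hor : ∀ a b, ¬ (E a b ∧ E b a)) :
    |(NL EB E : ℤ) - (NL EB' E : ℤ)|
      ≤ (edgeCount EB : ℤ) * (Fintype.card V : ℤ) ^ (Fintype.card W - 2) * tau E := by
  have hmain := main_ind E hirr EB' horB' _ EB hirrB horB hsame rfl
  have hX : (0 : ℤ) ≤ (Fintype.card V : ℤ) ^ (Fintype.card W - 2) :=
    pow_nonneg (by positivity) _
  have h2 : (0 : ℤ) ≤ (Fintype.card V : ℤ) ^ (Fintype.card W - 2) * tau E :=
    mul_nonneg hX (tau_nonneg E)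
  rw [mul_assoc]
  refine hmain.trans ?_
  refine mul_le_mul_of_nonneg_right ?_ h2
  rw [Nat.cast_le]
  apply Finset.card_le_card
  intro p hp
  simp only [Finset.mem_filter, Finset.mem_univ, true_and] at hp ⊢
  exact hp.1
end

section
/- Suppose G is a digraph with m edges such that every induced subgraph of G on k vertices contains at most m/2 edges. Then the sum over all vertices v of √(d(v)) is at least (1/4)·√(mk), where d(v) is the total degree (indegree plus outdegree) of v. -/
open Finset

/-- Top-k selection: a set of `k` vertices whose `f`-values dominate the rest. -/
lemma exists_topk {V : Type*} [Fintype V] [DecidableEq V] (f : V → ℕ) :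
    ∀ k, k ≤ Fintype.card V →
    ∃ U : Finset V, U.card = k ∧ ∀ u ∈ U, ∀ v ∉ U, f v ≤ f u := by
  intro k
  induction k with
  | zero => intro _; exact ⟨∅, rfl, by simp⟩
  | succ n ih =>
    intro hk
    obtain ⟨U, hcard, hU⟩ := ih (Nat.le_of_succ_le hk)
    have hne : (Uᶜ : Finset V).Nonempty := by
      rw [← Finset.card_pos, Finset.card_compl, hcard]
      omega
    obtain ⟨v₀, hv₀mem, hv₀max⟩ := Finset.exists_max_image Uᶜ f hne
    have hv₀ : v₀ ∉ U := by simpa using hv₀mem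
    refine ⟨insert v₀ U, ?_, ?_⟩
    · rw [Finset.card_insert_of_notMem hv₀, hcard]
    · intro u hu v hv
      have hvU : v ∉ U := fun h => hv (Finset.mem_insert_of_mem h)
      rcases Finset.mem_insert.1 hu with rfl | hu'
      · exact hv₀max v (Finset.mem_compl.2 hvU)
      · exact hU u hu' v hvU

lemma count_split {V : Type*} [Fintype V] [DecidableEq V] (E : V → V → Prop)
    [DecidableRel E] (U : Finset V) :
    edgeCount E ≤ eAB E U U + ∑ v ∈ Uᶜ, (inDeg E v + outDeg E v) := by
  classical
  have hec : edgeCount E = ∑ a : V, ∑ b : V, (if E a b then 1 else 0) := by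
    rw [edgeCount, Finset.card_filter, ← Finset.univ_product_univ, Finset.sum_product]
  have heAB : ∀ A B : Finset V,
      eAB E A B = ∑ a ∈ A, ∑ b ∈ B, (if E a b then 1 else 0) := by
    intro A B
    rw [eAB, Finset.card_filter, Finset.sum_product]
  have hin : ∀ v, inDeg E v = ∑ w : V, (if E w v then 1 else 0) := by
    intro v; rw [inDeg, Finset.card_filter]
  have hout : ∀ v, outDeg E v = ∑ w : V, (if E v w then 1 else 0) := by
    intro v; rw [outDeg, Finset.card_filter]
  have hsplit : ∀ g : V → ℕ, ∑ a : V, g a = ∑ a ∈ U, g a + ∑ a ∈ Uᶜ, g a := by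
    intro g
    exact (Finset.sum_add_sum_compl U g).symm
  calc edgeCount E
      = ∑ a : V, ∑ b : V, (if E a b then 1 else 0) := hec
    _ = (∑ a ∈ U, ∑ b : V, (if E a b then 1 else 0))
        + ∑ a ∈ Uᶜ, ∑ b : V, (if E a b then 1 else 0) := hsplit _
    _ = (∑ a ∈ U, (∑ b ∈ U, (if E a b then 1 else 0)
          + ∑ b ∈ Uᶜ, (if E a b then 1 else 0)))
        + ∑ a ∈ Uᶜ, ∑ b : V, (if E a b then 1 else 0) := by
        congr 1
        exact Finset.sum_congr rfl fun a _ => hsplit _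
    _ = (∑ a ∈ U, ∑ b ∈ U, (if E a b then 1 else 0))
        + ((∑ a ∈ U, ∑ b ∈ Uᶜ, (if E a b then 1 else 0))
          + ∑ a ∈ Uᶜ, ∑ b : V, (if E a b then 1 else 0)) := by
        rw [Finset.sum_add_distrib]; ring
    _ ≤ eAB E U U + ∑ v ∈ Uᶜ, (inDeg E v + outDeg E v) := by
        rw [heAB]
        apply add_le_add_right
        rw [Finset.sum_add_distrib]
        apply add_le_add
        · rw [Finset.sum_comm]
          apply Finset.sum_le_sum
          intro v hv
          rw [hin]
          exact Finset.sum_le_sum_of_subset (Finset.subset_univ U)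
        · apply Finset.sum_le_sum
          intro v hv
          rw [hout]

/-- if every induced subgraph on `k` vertices has at most `m/2` edges, then
`∑_v √(d(v)) ≥ (1/4)√(mk)`. -/
theorem stmt7 {V : Type*} [Fintype V] [DecidableEq V] (E : V → V → Prop) [DecidableRel E]
    (k m : ℕ) (hm : edgeCount E = m) (hk : k ≤ Fintype.card V)
    (hind : ∀ U : Finset V, U.card = k → 2 * eAB E U U ≤ m) :
    (1 / 4 : ℝ) * Real.sqrt ((m : ℝ) * (k : ℝ))
      ≤ ∑ v : V, Real.sqrt ((inDeg E v : ℝ) + (outDeg E v : ℝ)) := by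
  classical
  set d : V → ℕ := fun v => inDeg E v + outDeg E v with hd
  have hRHS : ∑ v : V, Real.sqrt ((inDeg E v : ℝ) + (outDeg E v : ℝ))
      = ∑ v : V, Real.sqrt (d v : ℝ) := by
    apply Finset.sum_congr rfl
    intro v _
    congr 1
    push_cast [hd]
    ring
  rw [hRHS]
  set S : ℝ := ∑ v : V, Real.sqrt (d v : ℝ) with hS
  have hSnn : 0 ≤ S := Finset.sum_nonneg fun v _ => Real.sqrt_nonneg _
  rcases Nat.eq_zero_or_pos m with rfl | hm0
  · simpa using hSnn
  rcases Nat.eq_zero_or_pos k with rfl | hk0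
  · simpa using hSnn
  obtain ⟨U, hUcard, hUtop⟩ := exists_topk d k hk
  have hcount : m ≤ eAB E U U + ∑ v ∈ Uᶜ, d v := hm ▸ count_split E U
  have hEUU : 2 * eAB E U U ≤ m := hind U hUcard
  set T : ℕ := ∑ v ∈ Uᶜ, d v with hT
  have hmT : m ≤ 2 * T := by omega
  have hTpos : 0 < T := by omega
  have hne : (Uᶜ : Finset V).Nonempty := by
    by_contra h
    rw [Finset.not_nonempty_iff_eq_empty] at h
    rw [hT, h, Finset.sum_empty] at hTpos
    exact absurd hTpos (lt_irrefl 0)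
  obtain ⟨v₀, hv₀mem, hv₀max⟩ := Finset.exists_max_image Uᶜ d hne
  set D : ℕ := d v₀ with hD
  have hDpos : 0 < D := by
    by_contra h
    push_neg at h
    have : T = 0 := by
      rw [hT]
      apply Finset.sum_eq_zero
      intro v hv
      have := hv₀max v hv
      omega
    omega
  -- (a) k * √D ≤ S
  have ha : (k : ℝ) * Real.sqrt (D : ℝ) ≤ S := by
    have h1 : (k : ℝ) * Real.sqrt (D : ℝ) = ∑ u ∈ U, Real.sqrt (D : ℝ) := by
      rw [Finset.sum_const, hUcard, nsmul_eq_mul]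
    rw [h1]
    have h2 : ∑ u ∈ U, Real.sqrt (D : ℝ) ≤ ∑ u ∈ U, Real.sqrt (d u : ℝ) := by
      apply Finset.sum_le_sum
      intro u hu
      apply Real.sqrt_le_sqrt
      exact_mod_cast hUtop u hu v₀ (Finset.mem_compl.1 hv₀mem)
    refine h2.trans ?_
    apply Finset.sum_le_sum_of_subset_of_nonneg (Finset.subset_univ U)
    intro v _ _
    exact Real.sqrt_nonneg _
  -- (b) m/2 ≤ S * √D
  have hb : (m : ℝ) / 2 ≤ S * Real.sqrt (D : ℝ) := by
    have h1 : (T : ℝ) ≤ S * Real.sqrt (D : ℝ) := by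
      have h2 : (T : ℝ) = ∑ v ∈ Uᶜ, (d v : ℝ) := by rw [hT]; push_cast; ring
      rw [h2]
      have h3 : ∀ v ∈ Uᶜ, (d v : ℝ) ≤ Real.sqrt (d v : ℝ) * Real.sqrt (D : ℝ) := by
        intro v hv
        have h4 : Real.sqrt (d v : ℝ) * Real.sqrt (d v : ℝ) = (d v : ℝ) :=
          Real.mul_self_sqrt (by positivity)
        have h5 : Real.sqrt (d v : ℝ) ≤ Real.sqrt (D : ℝ) :=
          Real.sqrt_le_sqrt (by exact_mod_cast hv₀max v hv)
        nlinarith [Real.sqrt_nonneg ((d v : ℝ))]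
      refine (Finset.sum_le_sum h3).trans ?_
      rw [← Finset.sum_mul]
      apply mul_le_mul_of_nonneg_right _ (Real.sqrt_nonneg _)
      apply Finset.sum_le_sum_of_subset_of_nonneg (Finset.subset_univ _)
      intro v _ _
      exact Real.sqrt_nonneg _
    refine le_trans ?_ h1
    have : (m : ℝ) ≤ 2 * T := by exact_mod_cast hmT
    linarith
  -- combine: S^2 ≥ k*m/2
  have hsq : (m : ℝ) * k / 2 ≤ S ^ 2 := by
    have h1 : ((k : ℝ) * Real.sqrt (D : ℝ)) * ((m : ℝ) / 2)
        ≤ S * (S * Real.sqrt (D : ℝ)) := by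
      apply mul_le_mul ha hb (by positivity) hSnn
    have hDr : (0 : ℝ) < Real.sqrt (D : ℝ) := Real.sqrt_pos.2 (by exact_mod_cast hDpos)
    nlinarith [hDr, sq_nonneg S]
  have h1 : ((1 / 4 : ℝ) * Real.sqrt ((m : ℝ) * (k : ℝ))) ^ 2 ≤ S ^ 2 := by
    have hs := Real.sq_sqrt (show (0 : ℝ) ≤ (m : ℝ) * k by positivity)
    nlinarith [hsq]
  have h2 := Real.sqrt_le_sqrt h1
  rwa [Real.sqrt_sq (by positivity), Real.sqrt_sq hSnn] at h2
end

section
/- If G = (V, E) is a graph with m edges, then the sum over all vertices v of √(d(v)) is at least (1/4)·m^{3/4}. -/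
open Finset

/-- for a graph with `m` edges, `∑_v √(d(v)) ≥ (1/4) m^(3/4)`. -/
theorem stmt8 {V : Type*} [Fintype V] [DecidableEq V] (G : SimpleGraph V) [DecidableRel G.Adj] :
    (1 / 4 : ℝ) * (G.edgeFinset.card : ℝ) ^ ((3 : ℝ) / 4)
      ≤ ∑ v : V, Real.sqrt (G.degree v : ℝ) := by
  classical
  set s : ℝ := ∑ v : V, Real.sqrt (G.degree v : ℝ) with hs
  have hs0 : 0 ≤ s := Finset.sum_nonneg fun v _ => Real.sqrt_nonneg _
  by_cases hm0 : G.edgeFinset.card = 0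
  · rw [hm0]
    push_cast
    rw [Real.zero_rpow (by norm_num)]
    simpa using hs0
  · have hmpos : 0 < G.edgeFinset.card := Nat.pos_of_ne_zero hm0
    have hspos : 0 < s := by
      obtain ⟨e, he⟩ := Finset.card_pos.mp hmpos
      induction e using Sym2.ind with
      | _ u v =>
        have hadj : G.Adj u v := (SimpleGraph.mem_edgeFinset.mp he)
        have hd : 0 < G.degree u := by
          rw [SimpleGraph.degree_pos_iff_exists_adj]; exact ⟨v, hadj⟩
        have h1 : 0 < Real.sqrt (G.degree u : ℝ) := by
          apply Real.sqrt_pos.mpr; exact_mod_cast hd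
        calc (0:ℝ) < Real.sqrt (G.degree u : ℝ) := h1
          _ ≤ s := hs ▸ Finset.single_le_sum (f := fun w => Real.sqrt (G.degree w : ℝ))
              (fun _ _ => Real.sqrt_nonneg _) (mem_univ u)
    set c : ℝ := s ^ ((1:ℝ)/3) with hc
    have hcpos : 0 < c := Real.rpow_pos_of_pos hspos _
    set H : Finset V := univ.filter (fun v => c^2 ≤ (G.degree v : ℝ)) with hH
    -- Step A: card of H is at most s ^ (2/3)
    have hA : (H.card : ℝ) ≤ s ^ ((2:ℝ)/3) := by
      have h1 : (H.card : ℝ) * c ≤ s := by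
        calc (H.card : ℝ) * c = ∑ _v ∈ H, c := by rw [Finset.sum_const, nsmul_eq_mul]
          _ ≤ ∑ v ∈ H, Real.sqrt (G.degree v : ℝ) := by
            apply Finset.sum_le_sum
            intro v hv
            have hv' : c^2 ≤ (G.degree v : ℝ) := (Finset.mem_filter.mp hv).2
            calc c = Real.sqrt (c^2) := by rw [Real.sqrt_sq hcpos.le]
              _ ≤ Real.sqrt (G.degree v : ℝ) := Real.sqrt_le_sqrt hv'
          _ ≤ s := by
            rw [hs]
            exact Finset.sum_le_sum_of_subset_of_nonneg (Finset.subset_univ _)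
              (fun v _ _ => Real.sqrt_nonneg _)
      have h2 : s = s ^ ((2:ℝ)/3) * c := by
        rw [hc, ← Real.rpow_add hspos]
        norm_num
      rw [h2] at h1
      exact le_of_mul_le_mul_right h1 hcpos
    -- sqrt of card H at most c
    have hsqH : Real.sqrt (H.card : ℝ) ≤ c := by
      have := Real.sqrt_le_sqrt hA
      calc Real.sqrt (H.card : ℝ) ≤ Real.sqrt (s ^ ((2:ℝ)/3)) := this
        _ = c := by
          rw [Real.sqrt_eq_rpow, ← Real.rpow_mul hs0, hc]
          norm_num
    -- Step C: sum of degrees over H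
    have hC : ∑ v ∈ H, (G.degree v : ℝ) ≤ Real.sqrt (H.card : ℝ) * s := by
      have key : ∑ v ∈ H, (G.degree v : ℝ)
          = ∑ u : V, ((H.filter (fun v => G.Adj u v)).card : ℝ) := by
        rw [← Nat.cast_sum, ← Nat.cast_sum]
        congr 1
        calc ∑ v ∈ H, G.degree v = ∑ v ∈ H, ∑ u : V, (if G.Adj v u then 1 else 0) := by
              apply Finset.sum_congr rfl
              intro v _
              have hdv : G.degree v = (univ.filter (fun u => G.Adj v u)).card := by
                rw [SimpleGraph.degree]; congr 1; ext u; simp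
              rw [hdv, Finset.card_filter]
          _ = ∑ u : V, ∑ v ∈ H, (if G.Adj v u then 1 else 0) := Finset.sum_comm
          _ = ∑ u : V, (H.filter (fun v => G.Adj u v)).card := by
              apply Finset.sum_congr rfl
              intro u _
              rw [Finset.card_filter]
              apply Finset.sum_congr rfl
              intro v _
              simp [SimpleGraph.adj_comm]
      rw [key]
      calc ∑ u : V, ((H.filter (fun v => G.Adj u v)).card : ℝ)
          ≤ ∑ u : V, Real.sqrt (G.degree u : ℝ) * Real.sqrt (H.card : ℝ) := by
            apply Finset.sum_le_sum
            intro u _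
            have hle1 : (H.filter (fun v => G.Adj u v)).card ≤ G.degree u := by
              apply Finset.card_le_card
              intro v hv
              rw [SimpleGraph.mem_neighborFinset]
              exact (Finset.mem_filter.mp hv).2
            have hle2 : (H.filter (fun v => G.Adj u v)).card ≤ H.card :=
              Finset.card_filter_le _ _
            have h1 : ((H.filter (fun v => G.Adj u v)).card : ℝ)
                = Real.sqrt ((H.filter (fun v => G.Adj u v)).card : ℝ)
                  * Real.sqrt ((H.filter (fun v => G.Adj u v)).card : ℝ) := by
              rw [Real.mul_self_sqrt (by positivity)]
            rw [h1]
            apply mul_le_mul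
            · exact Real.sqrt_le_sqrt (by exact_mod_cast hle1)
            · exact Real.sqrt_le_sqrt (by exact_mod_cast hle2)
            · exact Real.sqrt_nonneg _
            · exact Real.sqrt_nonneg _
        _ = Real.sqrt (H.card : ℝ) * s := by
            rw [hs, ← Finset.sum_mul, mul_comm]
    -- Step B: sum of degrees over complement of H
    have hB : ∑ v ∈ Hᶜ, (G.degree v : ℝ) ≤ c * s := by
      calc ∑ v ∈ Hᶜ, (G.degree v : ℝ)
          ≤ ∑ v ∈ Hᶜ, c * Real.sqrt (G.degree v : ℝ) := by
            apply Finset.sum_le_sum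
            intro v hv
            have hv' : ¬ (c^2 ≤ (G.degree v : ℝ)) := by
              intro h
              exact (Finset.mem_compl.mp hv) (Finset.mem_filter.mpr ⟨mem_univ _, h⟩)
            have hlt : (G.degree v : ℝ) ≤ c^2 := le_of_not_ge hv'
            have hsq : Real.sqrt (G.degree v : ℝ) ≤ c := by
              calc Real.sqrt (G.degree v : ℝ) ≤ Real.sqrt (c^2) := Real.sqrt_le_sqrt hlt
                _ = c := Real.sqrt_sq hcpos.le
            calc (G.degree v : ℝ)
                = Real.sqrt (G.degree v : ℝ) * Real.sqrt (G.degree v : ℝ) := by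
                  rw [Real.mul_self_sqrt (by positivity)]
              _ ≤ c * Real.sqrt (G.degree v : ℝ) := by
                  apply mul_le_mul_of_nonneg_right hsq (Real.sqrt_nonneg _)
        _ = c * ∑ v ∈ Hᶜ, Real.sqrt (G.degree v : ℝ) := by rw [Finset.mul_sum]
        _ ≤ c * s := by
            apply mul_le_mul_of_nonneg_left _ hcpos.le
            rw [hs]
            exact Finset.sum_le_sum_of_subset_of_nonneg (Finset.subset_univ _)
              (fun v _ _ => Real.sqrt_nonneg _)
    -- combine
    have hsum : (2 * G.edgeFinset.card : ℝ) = ∑ v : V, (G.degree v : ℝ) := by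
      rw [← Nat.cast_sum]
      rw [SimpleGraph.sum_degrees_eq_twice_card_edges]
      push_cast
      ring
    have hmain : (2 * G.edgeFinset.card : ℝ) ≤ 2 * s ^ ((4:ℝ)/3) := by
      calc (2 * G.edgeFinset.card : ℝ) = ∑ v : V, (G.degree v : ℝ) := hsum
        _ = ∑ v ∈ H, (G.degree v : ℝ) + ∑ v ∈ Hᶜ, (G.degree v : ℝ) :=
            (Finset.sum_add_sum_compl H _).symm
        _ ≤ Real.sqrt (H.card : ℝ) * s + c * s := add_le_add hC hB
        _ ≤ c * s + c * s := by
            apply add_le_add_left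
            exact mul_le_mul_of_nonneg_right hsqH hs0
        _ = 2 * (c * s) := by ring
        _ = 2 * s ^ ((4:ℝ)/3) := by
            congr 1
            rw [hc]
            nth_rewrite 2 [← Real.rpow_one s]
            rw [← Real.rpow_add hspos]
            norm_num
    have hm4 : (G.edgeFinset.card : ℝ) ≤ s ^ ((4:ℝ)/3) := by linarith
    have hfin : (G.edgeFinset.card : ℝ) ^ ((3:ℝ)/4) ≤ s := by
      calc (G.edgeFinset.card : ℝ) ^ ((3:ℝ)/4)
          ≤ (s ^ ((4:ℝ)/3)) ^ ((3:ℝ)/4) :=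
            Real.rpow_le_rpow (by positivity) hm4 (by norm_num)
        _ = s := by
            rw [← Real.rpow_mul hs0]
            norm_num
    have hnn : (0:ℝ) ≤ (G.edgeFinset.card : ℝ) ^ ((3:ℝ)/4) := by positivity
    nlinarith [hfin, hnn]
end

section
/- Every digraph G on n vertices satisfies π(G) ≤ n·√(τ*(G)), where π(G) is the directed surplus and τ*(G) is the maximum of e(A,B) − e(B,A) over disjoint vertex subsets A, B. -/
open Finset

section Aux
set_option linter.unusedSectionVars false
set_option linter.unusedVariables false

variable {V : Type*} [Fintype V] [DecidableEq V]

omit [Fintype V] [DecidableEq V] in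
lemma chain_get {R : V → V → Prop} : ∀ (L : List V) (x : V), List.Chain R x L →
    ∀ i (h : i + 1 < (x::L).length), R ((x::L)[i]'(by omega)) ((x::L)[i+1]'h) := by
  intro L
  induction L with
  | nil => intro x _ i h; simp at h
  | cons y L ih =>
    intro x hc i h
    rcases List.chain_cons.1 hc with ⟨hxy, hc'⟩
    match i with
    | 0 => exact hxy
    | Nat.succ j =>
      have := ih y hc' j (by simpa using h)
      simpa using this

omit [Fintype V] [DecidableEq V] in
lemma cycle_of_transGen {R : V → V → Prop} {a : V} (h : Relation.TransGen R a a) :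
    hasDirCycle R := by
  rcases (Relation.TransGen.head'_iff).1 h with ⟨c, hac, hca⟩
  rcases List.exists_isChain_cons_of_relationReflTransGen hca with ⟨l, hl, hlast⟩
  set L : List V := c :: l with hL
  have hchain : List.Chain R a L := List.chain_cons.2 ⟨hac, (show List.Chain R c l from hl)⟩
  have hlast' : (a :: L).getLast (List.cons_ne_nil _ _) = a := by
    rw [hL, List.getLast_cons_cons]; exact hlast
  set k := L.length with hk
  have hlen : (a :: L).length = k + 1 := by simp [hk]
  have hk0 : 0 < k := by simp [hk, hL]
  refine ⟨k, hk0, fun i => (a :: L)[i.1]'(by omega), ?_⟩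
  intro i
  simp only
  have hgetlast : (a :: L)[k]'(by omega) = a := by
    have := List.getLast_eq_getElem (l := a :: L) (List.cons_ne_nil _ _)
    rw [hlast'] at this
    simp only [hlen] at this ⊢
    simpa using this.symm
  by_cases hik : i.1 + 1 < k
  · have := chain_get L a hchain i.1 (by omega)
    have hmod : (i.1 + 1) % k = i.1 + 1 := Nat.mod_eq_of_lt hik
    simp only [hmod]
    exact this
  · have hieq : i.1 + 1 = k := by have := i.2; omega
    have hmod : (i.1 + 1) % k = 0 := by rw [hieq]; simp
    have hedge := chain_get L a hchain i.1 (by omega)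
    simp only [hmod]
    have h0 : (a :: L)[(0:ℕ)]'(by omega) = a := rfl
    rw [h0]
    simp only [hieq, hgetlast] at hedge
    exact hedge

lemma exists_pos {R : V → V → Prop} (hirr : ∀ a, ¬ Relation.TransGen R a a) :
    ∃ pos : V → ℕ, Function.Injective pos ∧ (∀ v, pos v < Fintype.card V) ∧
      ∀ a b, R a b → pos a < pos b := by
  classical
  let r : V → V → Prop := fun x y => x = y ∨ Relation.TransGen R x y
  have hpo : IsPartialOrder V r := by
    refine { refl := fun a => Or.inl rfl, trans := ?_, antisymm := ?_ }
    · intro a b c hab hbc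
      rcases hab with rfl | hab
      · exact hbc
      rcases hbc with rfl | hbc
      · exact Or.inr hab
      · exact Or.inr (hab.trans hbc)
    · intro a b hab hba
      rcases hab with rfl | hab
      · rfl
      rcases hba with rfl | hba
      · rfl
      · exact absurd (hab.trans hba) (hirr a)
  obtain ⟨s, hs, hrs⟩ := extend_partialOrder r
  haveI := hs
  have hanti : ∀ a b, s a b → s b a → a = b := fun a b h1 h2 => Std.Antisymm.antisymm a b h1 h2
  have htot : ∀ a b, s a b ∨ s b a := fun a b => Std.Total.total a b
  have htrans : ∀ a b c, s a b → s b c → s a c := fun a b c h1 h2 => IsTrans.trans a b c h1 h2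
  let pos : V → ℕ := fun v => (univ.filter fun w => s w v ∧ w ≠ v).card
  have hstrict : ∀ a b, a ≠ b → s a b → pos a < pos b := by
    intro a b hne hab
    apply Finset.card_lt_card
    constructor
    · intro w hw
      simp only [mem_filter, mem_univ, true_and] at hw ⊢
      refine ⟨htrans _ _ _ hw.1 hab, ?_⟩
      rintro rfl
      exact hne (hanti _ _ hab hw.1)
    · intro hsub
      have : a ∈ univ.filter fun w => s w b ∧ w ≠ b := by
        simp only [mem_filter, mem_univ, true_and]
        exact ⟨hab, hne⟩
      have h2 := hsub this
      simp only [mem_filter, mem_univ, true_and] at h2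
      exact h2.2 rfl
  have hinj : Function.Injective pos := by
    intro a b hab
    by_contra hne
    rcases htot a b with h | h
    · exact absurd hab (Nat.ne_of_lt (hstrict a b hne h))
    · exact absurd hab.symm (Nat.ne_of_lt (hstrict b a (Ne.symm hne) h))
  refine ⟨pos, hinj, ?_, ?_⟩
  · intro v
    have hss : (univ.filter fun w => s w v ∧ w ≠ v) ⊂ univ := by
      refine Finset.ssubset_univ_iff.2 ?_
      intro hcontra
      have : v ∈ univ.filter fun w => s w v ∧ w ≠ v := by rw [hcontra]; exact mem_univ v
      simp only [mem_filter] at this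
      exact this.2.2 rfl
    have := Finset.card_lt_card hss
    simpa [Finset.card_univ] using this
  · intro a b hab
    have htg : Relation.TransGen R a b := Relation.TransGen.single hab
    have hne : a ≠ b := by rintro rfl; exact hirr a htg
    exact hstrict a b hne (hrs a b (Or.inr htg))

lemma same_block_bound (E : V → V → Prop) [DecidableRel E] (pos : V → ℕ)
    (hinj : Function.Injective pos) {s : ℕ} (hs : 0 < s) :
    (((univ : Finset (V × V)).filter (fun p => E p.1 p.2)).filter
      (fun p => pos p.1 < pos p.2 ∧ pos p.1 / s = pos p.2 / s)).card
      ≤ Fintype.card V * (s - 1) := by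
  classical
  have hcard : ((univ : Finset V) ×ˢ range (s - 1)).card = Fintype.card V * (s - 1) := by
    simp [Finset.card_product]
  rw [← hcard]
  apply Finset.card_le_card_of_injOn (fun p => (p.1, pos p.2 - pos p.1 - 1))
  · intro p hp
    simp only [mem_coe, mem_filter, mem_univ, true_and] at hp
    obtain ⟨_, hlt, heq⟩ := hp
    simp only [mem_coe, Finset.mem_product, mem_univ, true_and, mem_range]
    have e1 : s * (pos p.1 / s) + pos p.1 % s = pos p.1 := Nat.div_add_mod _ _
    have e2 : s * (pos p.1 / s) + pos p.2 % s = pos p.2 := by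
      rw [heq]; exact Nat.div_add_mod _ _
    have m2 : pos p.2 % s < s := Nat.mod_lt _ hs
    obtain ⟨Av, f1, f2⟩ : ∃ Av, Av + pos p.1 % s = pos p.1 ∧ Av + pos p.2 % s = pos p.2 :=
      ⟨_, e1, e2⟩
    omega
  · intro p hp q hq hfq
    simp only [mem_coe, mem_filter, mem_univ, true_and] at hp hq
    obtain ⟨_, hltp, _⟩ := hp
    obtain ⟨_, hltq, _⟩ := hq
    simp only [Prod.mk.injEq] at hfq
    obtain ⟨h1, h2⟩ := hfq
    rw [h1] at hltp h2
    have : pos p.2 = pos q.2 := by omega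
    exact Prod.ext h1 (hinj this)

lemma key_count (E : V → V → Prop) [DecidableRel E] (S : Finset (V × V))
    (pos : V → ℕ) (hinj : Function.Injective pos) (hposlt : ∀ v, pos v < Fintype.card V)
    (hS : ∀ a b, E a b → (a, b) ∉ S → pos a < pos b) (s : ℕ) (hs : 0 < s) (t : ℤ)
    (ht : ∀ A B : Finset V, Disjoint A B → (eAB E A B : ℤ) - eAB E B A ≤ t) (ht0 : 0 ≤ t) :
    (edgeCount E : ℤ) ≤ 2 * S.card + (Fintype.card V : ℤ) * ((s - 1 : ℕ) : ℤ)
      + (((Fintype.card V - 1) / s : ℕ) : ℤ) * t := by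
  classical
  set n := Fintype.card V with hn
  set D := (n - 1) / s with hD
  set F := (univ : Finset (V × V)).filter (fun p => E p.1 p.2) with hF
  set Bl : ℕ → Finset V := fun k => univ.filter fun v => pos v / s = k with hBl
  set Al : ℕ → Finset V := fun k => univ.filter fun v => k < pos v / s with hAl
  set fwd := F.filter (fun p => pos p.1 < pos p.2) with hfwd
  set nfwd := F.filter (fun p => ¬ pos p.1 < pos p.2) with hnfwd
  have hsplit : fwd.card + nfwd.card = F.card :=
    Finset.card_filter_add_card_filter_not _
  have hnfwdS : nfwd ⊆ S := by
    intro p hp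
    rw [hnfwd, mem_filter] at hp
    obtain ⟨hpF, hnlt⟩ := hp
    rw [hF, mem_filter] at hpF
    by_contra hpS
    exact hnlt (hS p.1 p.2 hpF.2 (by simpa using hpS))
  -- split fwd by block
  have hsplit2 : (fwd.filter fun p => pos p.1 / s = pos p.2 / s).card
      + (fwd.filter fun p => ¬ pos p.1 / s = pos p.2 / s).card = fwd.card :=
    Finset.card_filter_add_card_filter_not _
  have hsame : (fwd.filter fun p => pos p.1 / s = pos p.2 / s).card ≤ n * (s - 1) := by
    have := same_block_bound E pos hinj hs
    rw [hfwd, Finset.filter_filter]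
    exact this
  set fwdC := F.filter (fun p => pos p.1 / s < pos p.2 / s) with hfwdC
  set bwdC := F.filter (fun p => pos p.2 / s < pos p.1 / s) with hbwdC
  have hcross_sub : (fwd.filter fun p => ¬ pos p.1 / s = pos p.2 / s) ⊆ fwdC := by
    intro p hp
    rw [mem_filter, hfwd, mem_filter] at hp
    rw [hfwdC, mem_filter]
    refine ⟨hp.1.1, ?_⟩
    exact lt_of_le_of_ne (Nat.div_le_div_right (le_of_lt hp.1.2)) hp.2
  have hbwdC_sub : bwdC ⊆ nfwd := by
    intro p hp
    rw [hbwdC, mem_filter] at hp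
    rw [hnfwd, mem_filter]
    refine ⟨hp.1, ?_⟩
    intro hlt
    have h1 : pos p.1 / s ≤ pos p.2 / s := Nat.div_le_div_right (le_of_lt hlt)
    have h2 := hp.2
    omega
  have hn1 : ∀ v : V, pos v / s ≤ D := by
    intro v
    have h1 : pos v < n := hposlt v
    have : pos v ≤ n - 1 := by omega
    exact Nat.div_le_div_right this
  -- fiberwise decompositions
  have hfiber : ∀ k, (fwdC.filter fun p => pos p.1 / s = k)
      = ((Bl k ×ˢ Al k).filter fun p => E p.1 p.2) := by
    intro k
    ext ⟨a, b⟩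
    simp only [mem_filter, hfwdC, hF, hBl, hAl, Finset.mem_product, mem_univ, true_and]
    constructor
    · rintro ⟨⟨hE, hlt⟩, rfl⟩
      exact ⟨⟨rfl, hlt⟩, hE⟩
    · rintro ⟨⟨h1, h2⟩, hE⟩
      exact ⟨⟨hE, by omega⟩, h1⟩
  have hfiber2 : ∀ k, (bwdC.filter fun p => pos p.2 / s = k)
      = ((Al k ×ˢ Bl k).filter fun p => E p.1 p.2) := by
    intro k
    ext ⟨a, b⟩
    simp only [mem_filter, hbwdC, hF, hBl, hAl, Finset.mem_product, mem_univ, true_and]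
    constructor
    · rintro ⟨⟨hE, hlt⟩, rfl⟩
      exact ⟨⟨hlt, rfl⟩, hE⟩
    · rintro ⟨⟨h1, h2⟩, hE⟩
      exact ⟨⟨hE, by omega⟩, h2⟩
  have hfc : fwdC.card = ∑ k ∈ range (D + 1), eAB E (Bl k) (Al k) := by
    rw [Finset.card_eq_sum_card_fiberwise (f := fun p => pos p.1 / s) (t := range (D + 1))
      (fun p _ => mem_range.2 (by simp only; have := hn1 p.1; omega))]
    exact Finset.sum_congr rfl fun k _ => by rw [hfiber k]; rfl
  have hbc : bwdC.card = ∑ k ∈ range (D + 1), eAB E (Al k) (Bl k) := by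
    rw [Finset.card_eq_sum_card_fiberwise (f := fun p => pos p.2 / s) (t := range (D + 1))
      (fun p _ => mem_range.2 (by simp only; have := hn1 p.2; omega))]
    exact Finset.sum_congr rfl fun k _ => by rw [hfiber2 k]; rfl
  have hAlast : Al D = ∅ := by
    rw [hAl]
    apply Finset.filter_eq_empty_iff.2
    intro v _
    have := hn1 v
    omega
  have hsum : (∑ k ∈ range (D + 1), ((eAB E (Bl k) (Al k) : ℤ) - eAB E (Al k) (Bl k)))
      ≤ (D : ℤ) * t := by
    rw [Finset.sum_range_succ]
    have hlast : (eAB E (Bl D) (Al D) : ℤ) - eAB E (Al D) (Bl D) = 0 := by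
      rw [hAlast]
      simp [eAB]
    rw [hlast, add_zero]
    have := Finset.sum_le_card_nsmul (range D)
      (fun k => (eAB E (Bl k) (Al k) : ℤ) - eAB E (Al k) (Bl k)) t
      (fun k _ => ht (Bl k) (Al k) (by
        rw [Finset.disjoint_left]
        intro v hv hv2
        rw [hBl, mem_filter] at hv
        rw [hAl, mem_filter] at hv2
        omega))
    simpa [nsmul_eq_mul, Finset.card_range] using this
  -- assemble
  have hcast : (fwdC.card : ℤ) - bwdC.card ≤ (D : ℤ) * t := by
    rw [hfc, hbc]
    push_cast
    rw [← Finset.sum_sub_distrib]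
    exact hsum
  have hb1 : (bwdC.card : ℤ) ≤ S.card := by
    exact_mod_cast Finset.card_le_card (hbwdC_sub.trans hnfwdS)
  have hb2 : (nfwd.card : ℤ) ≤ S.card := by
    exact_mod_cast Finset.card_le_card hnfwdS
  have hcr : ((fwd.filter fun p => ¬ pos p.1 / s = pos p.2 / s).card : ℤ) ≤ fwdC.card := by
    exact_mod_cast Finset.card_le_card hcross_sub
  have hme : (edgeCount E : ℤ) = F.card := by rw [hF]; rfl
  have hs1 : ((fwd.filter fun p => pos p.1 / s = pos p.2 / s).card : ℤ) ≤ (n : ℤ) * ((s-1 : ℕ) : ℤ) := by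
    exact_mod_cast hsame
  have hsp : (fwd.card : ℤ) + nfwd.card = F.card := by exact_mod_cast hsplit
  have hsp2 : ((fwd.filter fun p => pos p.1 / s = pos p.2 / s).card : ℤ)
      + ((fwd.filter fun p => ¬ pos p.1 / s = pos p.2 / s).card : ℤ) = fwd.card := by
    exact_mod_cast hsplit2
  rw [hme]
  linarith


lemma tauStar_nonneg (E : V → V → Prop) [DecidableRel E] : 0 ≤ tauStar E := by
  have h := Finset.le_sup' (f := fun AB : Finset V × Finset V =>
      (eAB E AB.1 AB.2 : ℤ) - (eAB E AB.2 AB.1 : ℤ))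
    (b := ((∅ : Finset V), (∅ : Finset V)))
    (by simp : ((∅ : Finset V), (∅ : Finset V)) ∈
      (univ : Finset (Finset V × Finset V)).filter fun AB => Disjoint AB.1 AB.2)
  simpa [tauStar, eAB] using h

lemma le_tauStar (E : V → V → Prop) [DecidableRel E] {A B : Finset V} (h : Disjoint A B) :
    (eAB E A B : ℤ) - eAB E B A ≤ tauStar E := by
  exact Finset.le_sup' (f := fun AB : Finset V × Finset V =>
      (eAB E AB.1 AB.2 : ℤ) - (eAB E AB.2 AB.1 : ℤ))
    (b := (A, B)) (by simp [h])

lemma beta_attained (E : V → V → Prop) [DecidableRel E] :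
    ∃ S : Finset (V × V), IsFAS E S ∧ S.card = beta E := by
  have hne : {k | ∃ S : Finset (V × V), IsFAS E S ∧ S.card = k}.Nonempty := by
    refine ⟨_, (univ : Finset (V × V)).filter (fun p => E p.1 p.2), ⟨?_, ?_⟩, rfl⟩
    · intro e he
      exact (mem_filter.1 he).2
    · rintro ⟨l, hl, v, hv⟩
      have h0 := hv ⟨0, hl⟩
      exact h0.2 (mem_filter.2 ⟨mem_univ _, h0.1⟩)
  have := Nat.sInf_mem hne
  obtain ⟨S, hS, hcard⟩ := this
  exact ⟨S, hS, hcard⟩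

end Aux

/-- `π(G) ≤ n √(τ*(G))`. -/
theorem stmt10 {V : Type*} [Fintype V] [DecidableEq V] (E : V → V → Prop) [DecidableRel E] :
    surplus E ≤ (Fintype.card V : ℝ) * Real.sqrt ((tauStar E : ℝ)) := by
  classical
  set t : ℤ := tauStar E with htdef
  have ht0 : 0 ≤ t := tauStar_nonneg E
  set tn : ℕ := t.toNat with htn
  set s : ℕ := Nat.sqrt tn + 1 with hsdef
  have hs : 0 < s := Nat.succ_pos _
  obtain ⟨S, hSfas, hScard⟩ := beta_attained E
  set R : V → V → Prop := fun a b => E a b ∧ (a, b) ∉ S with hR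
  have hirr : ∀ a, ¬ Relation.TransGen R a a := by
    intro a h
    exact hSfas.2 (cycle_of_transGen h)
  obtain ⟨pos, hinj, hposlt, hstrict⟩ := exists_pos hirr
  have hS' : ∀ a b, E a b → (a, b) ∉ S → pos a < pos b := fun a b h1 h2 =>
    hstrict a b ⟨h1, h2⟩
  have key := key_count E S pos hinj hposlt hS' s hs t
    (fun A B h => le_tauStar E h) ht0
  set n := Fintype.card V with hn
  set D : ℕ := (n - 1) / s with hD
  -- real estimates
  have htR : ((tn : ℝ)) = ((t : ℤ) : ℝ) := by
    rw [htn]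
    exact_mod_cast congrArg (fun z : ℤ => (z : ℝ)) (Int.toNat_of_nonneg ht0)
  have hsqrt_nonneg : (0 : ℝ) ≤ Real.sqrt ((t : ℤ) : ℝ) := Real.sqrt_nonneg _
  have est1 : ((s - 1 : ℕ) : ℝ) ≤ Real.sqrt ((t : ℤ) : ℝ) := by
    have h1 : ((s - 1 : ℕ) : ℝ) = ((Nat.sqrt tn : ℕ) : ℝ) := by
      rw [hsdef]; norm_num
    rw [h1, ← htR]
    have h2 : ((Nat.sqrt tn : ℕ) : ℝ) = Real.sqrt (((Nat.sqrt tn : ℕ) : ℝ) ^ 2) :=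
      (Real.sqrt_sq (by positivity)).symm
    rw [h2]
    apply Real.sqrt_le_sqrt
    have := Nat.sqrt_le' tn
    exact_mod_cast this
  have hsle : Real.sqrt ((t : ℤ) : ℝ) ≤ (s : ℝ) := by
    rw [← htR]
    have h1 : ((tn : ℕ) : ℝ) ≤ ((s : ℝ)) ^ 2 := by
      have := Nat.lt_succ_sqrt' tn
      have h2 : tn ≤ s ^ 2 := by
        have h3 := (Nat.lt_succ_sqrt' tn).le
        rw [hsdef]
        simpa [Nat.succ_eq_add_one] using h3
      exact_mod_cast h2
    calc Real.sqrt (tn : ℝ) ≤ Real.sqrt ((s : ℝ) ^ 2) := Real.sqrt_le_sqrt h1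
      _ = (s : ℝ) := Real.sqrt_sq (by positivity)
  have est2 : ((D : ℕ) : ℝ) * ((t : ℤ) : ℝ) ≤ (n : ℝ) * Real.sqrt ((t : ℤ) : ℝ) := by
    have hDs : ((D : ℕ) : ℝ) * (s : ℝ) ≤ (n : ℝ) := by
      have : D * s ≤ n := (Nat.div_mul_le_self (n - 1) s).trans (Nat.sub_le n 1)
      exact_mod_cast this
    have hts : ((t : ℤ) : ℝ) ≤ (s : ℝ) * Real.sqrt ((t : ℤ) : ℝ) := by
      have h0 : (0 : ℝ) ≤ ((t : ℤ) : ℝ) := by exact_mod_cast ht0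
      calc ((t : ℤ) : ℝ) = Real.sqrt ((t : ℤ) : ℝ) * Real.sqrt ((t : ℤ) : ℝ) :=
            (Real.mul_self_sqrt h0).symm
        _ ≤ (s : ℝ) * Real.sqrt ((t : ℤ) : ℝ) :=
            mul_le_mul_of_nonneg_right hsle hsqrt_nonneg
    calc ((D : ℕ) : ℝ) * ((t : ℤ) : ℝ)
        ≤ ((D : ℕ) : ℝ) * ((s : ℝ) * Real.sqrt ((t : ℤ) : ℝ)) := by
          apply mul_le_mul_of_nonneg_left hts (by positivity)
      _ = (((D : ℕ) : ℝ) * (s : ℝ)) * Real.sqrt ((t : ℤ) : ℝ) := by ring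
      _ ≤ (n : ℝ) * Real.sqrt ((t : ℤ) : ℝ) :=
          mul_le_mul_of_nonneg_right hDs hsqrt_nonneg
  have keyR : (edgeCount E : ℝ) ≤ 2 * (S.card : ℝ) + (n : ℝ) * ((s - 1 : ℕ) : ℝ)
      + ((D : ℕ) : ℝ) * ((t : ℤ) : ℝ) := by
    exact_mod_cast key
  have hns1 : (n : ℝ) * ((s - 1 : ℕ) : ℝ) ≤ (n : ℝ) * Real.sqrt ((t : ℤ) : ℝ) :=
    mul_le_mul_of_nonneg_left est1 (by positivity)
  rw [hScard] at keyR
  rw [surplus]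
  rw [htdef] at hns1 est2 keyR ⊢
  push_cast at keyR hns1 est2 ⊢
  linarith
end

section
/- For any integer r ≥ 3 and any n that is a multiple of r+1, the balanced blowup of the directed (r+1)-cycle on n vertices is a digraph G containing no directed cycle of length at most r, and β(G) = n²/(r+1)². -/
open Finset

lemma aux_fin_mk_mod (m : ℕ) (i : Fin (m+1)) (h : (i.1 + 1) % (m+1) < m+1) :
    (⟨(i.1 + 1) % (m+1), h⟩ : Fin (m+1)) = i + 1 := by
  apply Fin.ext
  simp [Fin.add_def, Fin.val_one', Nat.add_mod]

lemma aux_card_two_constraints (r t : ℕ) (i j : Fin (r+1)) (hij : i ≠ j) (x y : Fin t) :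
    ((Finset.univ : Finset (Fin (r+1) → Fin t)).filter
      (fun a => a i = x ∧ a j = y)).card ≤ t ^ (r - 1) := by
  classical
  have hcard : Fintype.card ({k : Fin (r+1) // k ≠ i ∧ k ≠ j} → Fin t) = t ^ (r-1) := by
    rw [Fintype.card_fun, Fintype.card_fin]
    congr 1
    rw [Fintype.card_subtype]
    have h2 : (Finset.univ.filter (fun k : Fin (r+1) => k ≠ i ∧ k ≠ j)) =
        Finset.univ \ {i, j} := by
      ext k; simp [and_comm]
    rw [h2, Finset.card_sdiff_of_subset (Finset.subset_univ _), Finset.card_univ, Fintype.card_fin,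
      Finset.card_insert_of_notMem (by simpa using hij), Finset.card_singleton]
    omega
  calc ((Finset.univ : Finset (Fin (r+1) → Fin t)).filter
      (fun a => a i = x ∧ a j = y)).card
      ≤ (Finset.univ : Finset ({k : Fin (r+1) // k ≠ i ∧ k ≠ j} → Fin t)).card := by
        apply Finset.card_le_card_of_injOn (fun a k => a k.1) (fun _ _ => Finset.mem_univ _)
        intro a ha b hb hab
        simp only [Finset.mem_coe, Finset.mem_filter] at ha hb
        funext k
        by_cases hki : k = i
        · rw [hki, ha.2.1, hb.2.1]
        · by_cases hkj : k = j
          · rw [hkj, ha.2.2, hb.2.2]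
          · exact congrFun hab ⟨k, hki, hkj⟩
    _ = t ^ (r-1) := by rw [Finset.card_univ, hcard]

open Fin.NatCast in
lemma aux_no_short (r t l : ℕ) (hl1 : 1 ≤ l) (hlr : l ≤ r) :
    ¬ hasDirCycleLen (fun p q : Fin (r+1) × Fin t => q.1 = p.1 + 1) l := by
  rintro ⟨hl, v, hv⟩
  have key : ∀ k : ℕ, (v ⟨k % l, Nat.mod_lt _ hl⟩).1
      = (v ⟨0 % l, Nat.mod_lt _ hl⟩).1 + (k : Fin (r+1)) := by
    intro k
    induction k with
    | zero => simp
    | succ k ih =>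
      have h2 := hv ⟨k % l, Nat.mod_lt _ hl⟩
      simp only [Nat.mod_add_mod] at h2
      rw [h2, ih, Nat.cast_add, Nat.cast_one, add_assoc]
  have hfin := key l
  simp only [Nat.mod_self, Nat.zero_mod] at hfin
  have h0 : ((l : ℕ) : Fin (r+1)) = 0 := (left_eq_add.mp hfin)
  have hdvd : (r+1) ∣ l := (Fin.natCast_eq_zero).mp h0
  have := Nat.le_of_dvd (by omega) hdvd
  omega

lemma aux_upper (r t : ℕ) :
    ∃ S : Finset ((Fin (r+1) × Fin t) × (Fin (r+1) × Fin t)),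
      IsFAS (fun p q => q.1 = p.1 + 1) S ∧ S.card = t^2 := by
  classical
  refine ⟨(Finset.univ : Finset (Fin t × Fin t)).image
    (fun xy => ((Fin.last r, xy.1), ((0 : Fin (r+1)), xy.2))), ?_, ?_⟩
  · have hmem : ∀ e : (Fin (r+1) × Fin t) × (Fin (r+1) × Fin t),
        e ∈ (Finset.univ : Finset (Fin t × Fin t)).image
          (fun xy => ((Fin.last r, xy.1), ((0 : Fin (r+1)), xy.2)))
        ↔ e.1.1 = Fin.last r ∧ e.2.1 = 0 := by
      rintro ⟨⟨p1, p2⟩, ⟨q1, q2⟩⟩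
      simp [Prod.ext_iff, eq_comm]
    constructor
    · intro e he
      rw [hmem] at he
      show e.2.1 = e.1.1 + 1
      rw [he.1, he.2, Fin.last_add_one]
    · rintro ⟨l, hl, v, hv⟩
      obtain ⟨i0, -, hmax⟩ := Finset.exists_max_image Finset.univ
        (fun i => ((v i).1 : ℕ)) ⟨⟨0, hl⟩, Finset.mem_univ _⟩
      obtain ⟨hedge, hnS⟩ := hv i0
      rw [hmem] at hnS
      have hne : (v i0).1 ≠ Fin.last r := by
        intro hlast
        exact hnS ⟨hlast, by rw [hedge, hlast, Fin.last_add_one]⟩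
      have hlt : (v i0).1 < Fin.last r := lt_of_le_of_ne (Fin.le_last _) hne
      have hval : ((v i0).1 + 1).1 = (v i0).1.1 + 1 := Fin.val_add_one_of_lt hlt
      have := hmax ⟨(i0.1 + 1) % l, Nat.mod_lt _ hl⟩ (Finset.mem_univ _)
      rw [hedge] at this
      omega
  · rw [Finset.card_image_of_injective _ (by intro a b; simp [Prod.ext_iff]),
      Finset.card_univ, Fintype.card_prod, Fintype.card_fin, sq]

lemma aux_lower (r t : ℕ) (hr : 3 ≤ r) (ht : 0 < t)
    (S : Finset ((Fin (r+1) × Fin t) × (Fin (r+1) × Fin t)))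
    (hS : IsFAS (fun p q => q.1 = p.1 + 1) S) : t^2 ≤ S.card := by
  classical
  have hcover : ∀ a : Fin (r+1) → Fin t, ∃ i : Fin (r+1),
      ((i, a i), (i+1, a (i+1))) ∈ S := by
    intro a
    by_contra hcon
    push_neg at hcon
    apply hS.2
    refine ⟨r+1, Nat.succ_pos r, fun i => (i, a i), fun i => ?_⟩
    rw [aux_fin_mk_mod r i]
    exact ⟨rfl, hcon i⟩
  have hsub : (Finset.univ : Finset (Fin (r+1) → Fin t)) ⊆
      S.biUnion (fun e => Finset.univ.filter
        (fun a : Fin (r+1) → Fin t => a e.1.1 = e.1.2 ∧ a e.2.1 = e.2.2)) := by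
    intro a _
    obtain ⟨i, hi⟩ := hcover a
    exact Finset.mem_biUnion.mpr ⟨_, hi, by simp⟩
  have h1 : t^(r+1) ≤ S.card * t^(r-1) := by
    calc t^(r+1) = (Finset.univ : Finset (Fin (r+1) → Fin t)).card := by
          rw [Finset.card_univ, Fintype.card_fun, Fintype.card_fin, Fintype.card_fin]
      _ ≤ _ := Finset.card_le_card hsub
      _ ≤ ∑ e ∈ S, (Finset.univ.filter
            (fun a : Fin (r+1) → Fin t => a e.1.1 = e.1.2 ∧ a e.2.1 = e.2.2)).card :=
          Finset.card_biUnion_le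
      _ ≤ ∑ _e ∈ S, t^(r-1) := by
          apply Finset.sum_le_sum
          intro e he
          apply aux_card_two_constraints
          have hedge : e.2.1 = e.1.1 + 1 := hS.1 e he
          rw [hedge]
          intro hcontra
          have h10 : (1 : Fin (r+1)) = 0 := left_eq_add.mp hcontra
          have hdvd : (r+1) ∣ 1 := Fin.natCast_eq_zero.mp (by exact h10)
          exact absurd (Nat.le_of_dvd one_pos hdvd) (by omega)
      _ = S.card * t^(r-1) := by rw [Finset.sum_const, smul_eq_mul]
  have hsplit : t^(r+1) = t^2 * t^(r-1) := by
    rw [← pow_add]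
    congr 1
    omega
  rw [hsplit] at h1
  exact Nat.le_of_mul_le_mul_right h1 (pow_pos ht _)

/-- for `r ≥ 3` and `(r+1) ∣ n`, the balanced blowup of the directed
`(r+1)`-cycle on `n` vertices has no directed cycle of length at most `r`, and its minimum
feedback arc set has size exactly `n²/(r+1)²`. -/
theorem stmt12 (r n : ℕ) (hr : 3 ≤ r) (hn : (r + 1) ∣ n) :
    (∀ l : ℕ, 1 ≤ l → l ≤ r →
      ¬ hasDirCycleLen (fun p q : Fin (r + 1) × Fin (n / (r + 1)) => q.1 = p.1 + 1) l)
    ∧ beta (fun p q : Fin (r + 1) × Fin (n / (r + 1)) => q.1 = p.1 + 1)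
        = n ^ 2 / (r + 1) ^ 2 := by
  obtain ⟨c, rfl⟩ := hn
  have ht : (r + 1) * c / (r + 1) = c := Nat.mul_div_cancel_left _ (Nat.succ_pos r)
  have ht2 : ((r + 1) * c) ^ 2 / (r + 1) ^ 2 = c ^ 2 := by
    rw [mul_pow, Nat.mul_div_cancel_left _ (by positivity)]
  rw [ht, ht2]
  constructor
  · intro l h1 h2
    exact aux_no_short r c l h1 h2
  · obtain ⟨S, hS, hcard⟩ := aux_upper r c
    apply le_antisymm
    · exact Nat.sInf_le ⟨S, hS, hcard⟩
    · refine le_csInf ⟨c ^ 2, S, hS, hcard⟩ ?_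
      rintro k ⟨T, hT, rfl⟩
      rcases Nat.eq_zero_or_pos c with hc | hc
      · simp [hc]
      · exact aux_lower r c hr hc T hT
end

section
/- For every n that is a multiple of 3, there exists a digraph G on n = 3N vertices with no directed cycle of length less than 2N (i.e., G is (2N−1)-free) such that β(G) = 2. -/
open Finset

namespace Stmt14Aux

/-- Edge relation of the construction on `Fin N × Fin 3`:
`(i,t)` with `t ≠ 2` plays `u_i/v_i`, `(i,2)` plays `w_i`. -/
def myE (N : ℕ) (a b : Fin N × Fin 3) : Prop :=
  (a.2 ≠ 2 ∧ b.2 = 2 ∧ b.1 = a.1) ∨ (a.2 = 2 ∧ b.2 ≠ 2 ∧ b.1.1 = (a.1.1 + 1) % N)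

/-- Potential function: each edge increases it by 1 mod 2N. -/
def myf (N : ℕ) (p : Fin N × Fin 3) : ℕ := 2 * p.1.1 + (if p.2 = 2 then 1 else 0)

lemma myf_lt (N : ℕ) (p : Fin N × Fin 3) : myf N p < 2 * N := by
  have := p.1.isLt
  unfold myf; split <;> omega

lemma myE_step {N : ℕ} {a b : Fin N × Fin 3} (h : myE N a b) :
    myf N b = (myf N a + 1) % (2 * N) := by
  have ha := a.1.isLt
  rcases h with ⟨h1, h2, h3⟩ | ⟨h1, h2, h3⟩
  · unfold myf
    rw [if_pos h2, if_neg h1, h3, Nat.mod_eq_of_lt (by omega)]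
  · unfold myf
    rw [if_pos h1, if_neg h2, h3]
    rcases Nat.lt_or_ge (a.1.1 + 1) N with h | h
    · rw [Nat.mod_eq_of_lt h, Nat.mod_eq_of_lt (by omega)]; omega
    · have hEq : a.1.1 + 1 = N := by omega
      rw [hEq, Nat.mod_self]
      have : 2 * a.1.1 + 1 + 1 = 2 * N := by omega
      rw [this, Nat.mod_self]

lemma cycle_mod {N l : ℕ} (hl : 0 < l) (v : Fin l → Fin N × Fin 3)
    (hv : ∀ i : Fin l, myE N (v i) (v ⟨(i.1 + 1) % l, Nat.mod_lt _ hl⟩)) :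
    ∀ j : ℕ, myf N (v ⟨j % l, Nat.mod_lt _ hl⟩)
      = (myf N (v ⟨0, hl⟩) + j) % (2 * N) := by
  intro j
  induction j with
  | zero =>
      have h0 : (0 : ℕ) % l = 0 := Nat.zero_mod l
      simp only [h0]
      rw [Nat.add_zero, Nat.mod_eq_of_lt (myf_lt N _)]
  | succ j ih =>
      have hstep := myE_step (hv ⟨j % l, Nat.mod_lt _ hl⟩)
      have hidx : ((j % l + 1) % l) = (j + 1) % l := Nat.mod_add_mod j l 1
      rw [show (⟨(j % l + 1) % l, Nat.mod_lt _ hl⟩ : Fin l)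
          = ⟨(j + 1) % l, Nat.mod_lt _ hl⟩ from Fin.ext hidx] at hstep
      rw [hstep, ih, Nat.mod_add_mod, Nat.add_assoc]

lemma cycle_dvd {N l : ℕ} (hl : 0 < l) (v : Fin l → Fin N × Fin 3)
    (hv : ∀ i : Fin l, myE N (v i) (v ⟨(i.1 + 1) % l, Nat.mod_lt _ hl⟩)) :
    2 * N ∣ l := by
  have h := cycle_mod hl v hv l
  rw [show (⟨l % l, Nat.mod_lt _ hl⟩ : Fin l) = ⟨0, hl⟩ from Fin.ext (Nat.mod_self l)] at h
  set x := myf N (v ⟨0, hl⟩) with hx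
  have hxlt : x < 2 * N := myf_lt N _
  have hmod : (x + l) % (2 * N) = (x + 0) % (2 * N) := by
    rw [Nat.add_zero, Nat.mod_eq_of_lt hxlt]; exact h.symm
  have := (Nat.ModEq.add_left_cancel' x hmod.symm : Nat.ModEq (2 * N) 0 l)
  exact (Nat.modEq_zero_iff_dvd.mp this.symm)

/-- The two disjoint long cycles: `c N t` visits `u_0,w_0,u_1,w_1,...` (with `u` replaced
by type `t`). -/
def cyc (N : ℕ) (t : Fin 3) (k : Fin (2 * N)) : Fin N × Fin 3 :=
  (⟨k.1 / 2, by have := k.isLt; omega⟩, if k.1 % 2 = 0 then t else 2)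

lemma cyc_snd (N : ℕ) (t : Fin 3) (k : Fin (2 * N)) :
    (cyc N t k).2 = t ∨ (cyc N t k).2 = 2 := by
  unfold cyc; split <;> simp

lemma cyc_edge {N : ℕ} (hN : 1 ≤ N) (t : Fin 3) (ht : t ≠ 2)
    (h2N : 0 < 2 * N) (i : Fin (2 * N)) :
    myE N (cyc N t i) (cyc N t ⟨(i.1 + 1) % (2 * N), Nat.mod_lt _ h2N⟩) := by
  have hi := i.isLt
  by_cases hpar : i.1 % 2 = 0
  · -- even position: (i/2, t) → (i/2, 2); no wrap since 2N is even
    have hlt : i.1 + 1 < 2 * N := by omega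
    have hmod : (i.1 + 1) % (2 * N) = i.1 + 1 := Nat.mod_eq_of_lt hlt
    left
    refine ⟨?_, ?_, ?_⟩
    · show (if i.1 % 2 = 0 then t else 2) ≠ 2
      rw [if_pos hpar]; exact ht
    · show (if ((i.1 + 1) % (2 * N)) % 2 = 0 then t else (2 : Fin 3)) = 2
      rw [hmod, if_neg (by omega)]
    · apply Fin.ext
      show ((i.1 + 1) % (2 * N)) / 2 = i.1 / 2
      rw [hmod]; omega
  · rcases Nat.lt_or_ge (i.1 + 1) (2 * N) with hlt | hge
    · -- odd position, no wrap: (i/2, 2) → (i/2+1, t)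
      have hmod : (i.1 + 1) % (2 * N) = i.1 + 1 := Nat.mod_eq_of_lt hlt
      right
      refine ⟨?_, ?_, ?_⟩
      · show (if i.1 % 2 = 0 then t else (2 : Fin 3)) = 2
        rw [if_neg hpar]
      · show (if ((i.1 + 1) % (2 * N)) % 2 = 0 then t else (2 : Fin 3)) ≠ 2
        rw [hmod, if_pos (by omega)]; exact ht
      · show ((i.1 + 1) % (2 * N)) / 2 = (i.1 / 2 + 1) % N
        rw [hmod, Nat.mod_eq_of_lt (by omega : i.1 / 2 + 1 < N)]
        omega
    · -- wrap-around: i = 2N-1 (odd), target is (0, t)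
      have hEq : i.1 + 1 = 2 * N := by omega
      have hmod : (i.1 + 1) % (2 * N) = 0 := by rw [hEq, Nat.mod_self]
      right
      refine ⟨?_, ?_, ?_⟩
      · show (if i.1 % 2 = 0 then t else (2 : Fin 3)) = 2
        rw [if_neg hpar]
      · show (if ((i.1 + 1) % (2 * N)) % 2 = 0 then t else (2 : Fin 3)) ≠ 2
        rw [hmod, if_pos (by omega)]; exact ht
      · show ((i.1 + 1) % (2 * N)) / 2 = (i.1 / 2 + 1) % N
        rw [hmod, (by omega : i.1 / 2 + 1 = N), Nat.mod_self]

lemma myE_not_both_two {N : ℕ} {a b : Fin N × Fin 3} (h : myE N a b)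
    (ha : a.2 = 2) : b.2 ≠ 2 := by
  rcases h with ⟨h1, _, _⟩ | ⟨_, h2, _⟩
  · exact absurd ha h1
  · exact h2

end Stmt14Aux

open Stmt14Aux

/-- for every `n = 3N` there is a digraph on `n` vertices with no directed
cycle of length less than `2N` (i.e. it is `(2N-1)`-free) whose minimum feedback arc set has
size exactly `2`. -/
theorem stmt14 (N : ℕ) (hN : 1 ≤ N) :
    ∃ (V : Type) (i1 : Fintype V) (i2 : DecidableEq V) (E : V → V → Prop),
      Fintype.card V = 3 * N ∧
      (∀ l : ℕ, 1 ≤ l → l ≤ 2 * N - 1 → ¬ hasDirCycleLen E l) ∧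
      beta E = 2 := by
  refine ⟨Fin N × Fin 3, inferInstance, inferInstance, myE N, ?_, ?_, ?_⟩
  · simp [Fintype.card_prod]; ring
  · rintro l h1 h2 ⟨hl, v, hv⟩
    have hd := cycle_dvd hl v hv
    have := Nat.le_of_dvd hl hd
    omega
  · -- beta = 2
    set i0 : Fin N := ⟨0, by omega⟩ with hi0
    set i1 : Fin N := ⟨1 % N, Nat.mod_lt _ (by omega)⟩ with hi1
    set S : Finset ((Fin N × Fin 3) × (Fin N × Fin 3)) :=
      {((i0, 2), (i1, 0)), ((i0, 2), (i1, 1))} with hS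
    have hSmem : ∀ e, e ∈ S ↔ e = ((i0, 2), (i1, 0)) ∨ e = ((i0, 2), (i1, 1)) := by
      intro e
      simp [hS, Finset.mem_insert, Finset.mem_singleton]
    have hScard : S.card = 2 := by
      rw [hS, Finset.card_insert_of_notMem, Finset.card_singleton]
      simp only [Finset.mem_singleton]
      intro h
      have : (0 : Fin 3) = 1 := congrArg (fun p => p.2.2) h
      exact absurd this (by decide)
    have hFAS : IsFAS (myE N) S := by
      constructor
      · intro e he
        rcases (hSmem e).1 he with rfl | rfl
        · right
          refine ⟨rfl, ?_, rfl⟩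
          show (0 : Fin 3) ≠ 2
          decide
        · right
          refine ⟨rfl, ?_, rfl⟩
          show (1 : Fin 3) ≠ 2
          decide
      · rintro ⟨l, hl, v, hv⟩
        have hd := cycle_dvd hl v (fun i => (hv i).1)
        have hlge : 2 * N ≤ l := Nat.le_of_dvd hl hd
        set x := myf N (v ⟨0, hl⟩) with hx
        have hxlt : x < 2 * N := myf_lt N _
        set j : ℕ := if x ≤ 1 then 1 - x else 2 * N + 1 - x with hj
        have hjlt : j < l := by rw [hj]; split <;> omega
        have hfj : myf N (v ⟨j % l, Nat.mod_lt _ hl⟩) = 1 := by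
          rw [cycle_mod hl v (fun i => (hv i).1) j, ← hx]
          rw [hj]
          split
          · rw [(by omega : x + (1 - x) = 1), Nat.mod_eq_of_lt (by omega)]
          · rw [(by omega : x + (2 * N + 1 - x) = 1 + 2 * N), Nat.add_mod_right,
              Nat.mod_eq_of_lt (by omega)]
        set k : Fin l := ⟨j % l, Nat.mod_lt _ hl⟩ with hk
        set w := v k with hw
        have hw2 : w.2 = 2 := by
          rcases eq_or_ne w.2 2 with h | h
          · exact h
          · exfalso; unfold myf at hfj; rw [if_neg h] at hfj; omega
        have hw1 : w.1 = i0 := by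
          apply Fin.ext
          unfold myf at hfj; rw [if_pos hw2] at hfj
          simp [hi0]; omega
        obtain ⟨hE, hnS⟩ := hv k
        rcases hE with ⟨h1, _, _⟩ | ⟨_, h2, h3⟩
        · exact h1 hw2
        · apply hnS
          set b := v ⟨(k.1 + 1) % l, Nat.mod_lt _ hl⟩ with hb
          have hb1 : b.1 = i1 := by
            apply Fin.ext
            rw [h3, hw1]
          have hb2 : b.2 = 0 ∨ b.2 = 1 := by
            have h3lt := b.2.isLt
            have hne : b.2.1 ≠ 2 := fun hc => h2 (Fin.ext hc)
            rcases (by omega : b.2.1 = 0 ∨ b.2.1 = 1) with h | h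
            · exact Or.inl (Fin.ext h)
            · exact Or.inr (Fin.ext h)
          rw [hSmem]
          have hwp : w = (i0, (2 : Fin 3)) := Prod.ext hw1 hw2
          rcases hb2 with h | h
          · left; rw [← hwp, show ((i1, 0) : Fin N × Fin 3) = b from (Prod.ext hb1 h).symm]
          · right; rw [← hwp, show ((i1, 1) : Fin N × Fin 3) = b from (Prod.ext hb1 h).symm]
    apply le_antisymm
    · exact Nat.sInf_le ⟨S, hFAS, hScard⟩
    · apply le_csInf
      · exact ⟨2, S, hFAS, hScard⟩
      rintro c ⟨T, hT, hTcard⟩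
      by_contra hlt
      have hT1 : T.card ≤ 1 := by omega
      have h2N : 0 < 2 * N := by omega
      have hedge : ∀ t : Fin 3, t ≠ 2 →
          ∃ i : Fin (2 * N),
            (cyc N t i, cyc N t ⟨(i.1 + 1) % (2 * N), Nat.mod_lt _ h2N⟩) ∈ T := by
        intro t ht
        by_contra h
        push_neg at h
        exact hT.2 ⟨2 * N, h2N, cyc N t, fun i => ⟨cyc_edge hN t ht h2N i, h i⟩⟩
      obtain ⟨a0, ha0⟩ := hedge 0 (by decide)
      obtain ⟨a1, ha1⟩ := hedge 1 (by decide)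
      have heq := Finset.card_le_one.mp hT1 _ ha0 _ ha1
      have hfst : cyc N 0 a0 = cyc N 1 a1 := congrArg Prod.fst heq
      have hsnd : cyc N 0 ⟨(a0.1 + 1) % (2 * N), Nat.mod_lt _ h2N⟩
          = cyc N 1 ⟨(a1.1 + 1) % (2 * N), Nat.mod_lt _ h2N⟩ := congrArg Prod.snd heq
      have hA : (cyc N 0 a0).2 = 2 := by
        rcases cyc_snd N 0 a0 with h | h
        · rcases cyc_snd N 1 a1 with h' | h'
          · rw [hfst, h'] at h; exact absurd h (by decide)
          · rw [hfst, h'] at h; exact absurd h (by decide)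
        · exact h
      have hB : (cyc N 0 ⟨(a0.1 + 1) % (2 * N), Nat.mod_lt _ h2N⟩).2 = 2 := by
        rcases cyc_snd N 0 ⟨(a0.1 + 1) % (2 * N), Nat.mod_lt _ h2N⟩ with h | h
        · rcases cyc_snd N 1 ⟨(a1.1 + 1) % (2 * N), Nat.mod_lt _ h2N⟩ with h' | h'
          · rw [hsnd, h'] at h; exact absurd h (by decide)
          · rw [hsnd, h'] at h; exact absurd h (by decide)
        · exact h
      exact myE_not_both_two (cyc_edge hN 0 (by decide) h2N a0) hA hB
end

section
/- Let H be an undirected graph on n vertices. There exists an orientation G of H such that for every s ∈ [n] and every pair of disjoint subsets A, B ⊆ V with |A| = |B| = s, |e_G(A,B) − (1/2)·ē(A,B)| ≤ 3·√(ē(A,B))·√(s·log(en/s)), where ē(A,B) is the number of edges of H with one endpoint in each of A, B, and e_G(A,B) counts edges of G directed from A to B. -/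
open Finset

section Stmt15AuxSec
open Finset Real

namespace Stmt15Aux

section Tail

variable {ι : Type*} [Fintype ι] [DecidableEq ι]

/-- number of coordinates in `F` where `ω` agrees with the target `σ`. -/
def Xcnt (F : Finset ι) (σ : ι → Bool) (ω : ι → Bool) : ℕ :=
  (F.filter fun p => ω p = σ p).card

lemma mgf_eq (F : Finset ι) (σ : ι → Bool) (l : ℝ) :
    ∑ ω : ι → Bool, Real.exp (l * (Xcnt F σ ω : ℝ)) =
      (1 + Real.exp l) ^ F.card * 2 ^ (Fintype.card ι - F.card) := by
  have hX : ∀ ω : ι → Bool, Real.exp (l * (Xcnt F σ ω : ℝ)) =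
      ∏ p : ι, (if p ∈ F ∧ ω p = σ p then Real.exp l else 1) := by
    intro ω
    have h1 : (Xcnt F σ ω : ℝ) = ∑ p : ι, (if p ∈ F ∧ ω p = σ p then (1:ℝ) else 0) := by
      have hset : F.filter (fun p => ω p = σ p)
          = univ.filter (fun p => p ∈ F ∧ ω p = σ p) := by
        ext p; simp
      rw [Xcnt, hset, ← Finset.sum_boole]
    rw [h1, Finset.mul_sum, Real.exp_sum]
    refine Finset.prod_congr rfl fun p _ => ?_
    split_ifs <;> simp
  rw [Finset.sum_congr rfl fun ω _ => hX ω]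
  have h2 : ∑ ω : ι → Bool, ∏ p : ι, (if p ∈ F ∧ ω p = σ p then Real.exp l else 1)
      = ∏ p : ι, ∑ b : Bool, (if p ∈ F ∧ b = σ p then Real.exp l else 1) := by
    rw [Finset.prod_univ_sum]
    rw [Fintype.piFinset_univ]
  rw [h2]
  have h3 : ∀ p : ι, (∑ b : Bool, (if p ∈ F ∧ b = σ p then Real.exp l else 1))
      = if p ∈ F then 1 + Real.exp l else 2 := by
    intro p
    rw [Fintype.sum_bool]
    by_cases hF : p ∈ F
    · cases hσ : σ p <;> simp [hF, hσ, add_comm]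
    · simp [hF]; norm_num
  rw [Finset.prod_congr rfl fun p _ => h3 p]
  rw [Finset.prod_ite (fun _ => (1 + Real.exp l)) (fun _ => (2:ℝ))]
  rw [Finset.prod_const, Finset.prod_const]
  congr 2
  · rw [Finset.filter_mem_eq_inter, Finset.univ_inter]
  · rw [← Finset.card_compl]
    congr 1
    ext p
    simp

lemma one_add_exp_le (l : ℝ) : 1 + Real.exp l ≤ 2 * Real.exp (l / 2 + l ^ 2 / 8) := by
  have h1 : 1 + Real.exp l = 2 * Real.exp (l / 2) * Real.cosh (l / 2) := by
    rw [Real.cosh_eq]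
    rw [show 2 * Real.exp (l / 2) * ((Real.exp (l / 2) + Real.exp (-(l / 2))) / 2)
        = Real.exp (l / 2) * Real.exp (l / 2) + Real.exp (l / 2) * Real.exp (-(l / 2)) by ring]
    rw [← Real.exp_add, ← Real.exp_add]
    norm_num [add_comm]
  have h2 : Real.cosh (l / 2) ≤ Real.exp ((l / 2) ^ 2 / 2) := Real.cosh_le_exp_half_sq _
  calc 1 + Real.exp l = 2 * Real.exp (l / 2) * Real.cosh (l / 2) := h1
    _ ≤ 2 * Real.exp (l / 2) * Real.exp ((l / 2) ^ 2 / 2) := by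
        have := Real.exp_pos (l / 2); nlinarith
    _ = 2 * Real.exp (l / 2 + l ^ 2 / 8) := by rw [mul_assoc, ← Real.exp_add]; ring_nf

lemma upper_tail (F : Finset ι) (σ : ι → Bool) (t : ℝ) (ht : 0 ≤ t) (hm : F.card ≠ 0) :
    (((univ : Finset (ι → Bool)).filter fun ω =>
        (F.card : ℝ) / 2 + t < (Xcnt F σ ω : ℝ)).card : ℝ)
      ≤ 2 ^ Fintype.card ι * Real.exp (-2 * t ^ 2 / F.card) := by
  set m : ℝ := (F.card : ℝ) with hmdef
  have hm0 : 0 < m := by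
    simp only [hmdef]
    exact_mod_cast Nat.pos_of_ne_zero hm
  set l : ℝ := 4 * t / m with hldef
  have hl : 0 ≤ l := by positivity
  set S := (univ : Finset (ι → Bool)).filter fun ω => m / 2 + t < (Xcnt F σ ω : ℝ) with hS
  have step1 : (S.card : ℝ) ≤ ∑ ω : ι → Bool, Real.exp (l * (Xcnt F σ ω : ℝ) - l * (m / 2 + t)) := by
    rw [Finset.card_eq_sum_ones S]
    push_cast
    calc (∑ _ω ∈ S, (1:ℝ))
        ≤ ∑ ω ∈ S, Real.exp (l * (Xcnt F σ ω : ℝ) - l * (m / 2 + t)) := by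
          refine Finset.sum_le_sum fun ω hω => ?_
          rw [hS, Finset.mem_filter] at hω
          rw [show (1:ℝ) = Real.exp 0 by simp]
          apply Real.exp_le_exp.mpr
          nlinarith [hω.2]
      _ ≤ ∑ ω : ι → Bool, Real.exp (l * (Xcnt F σ ω : ℝ) - l * (m / 2 + t)) := by
          apply Finset.sum_le_sum_of_subset_of_nonneg (Finset.filter_subset _ _)
          intros; positivity
  have step2 : ∑ ω : ι → Bool, Real.exp (l * (Xcnt F σ ω : ℝ) - l * (m / 2 + t))
      = Real.exp (-(l * (m / 2 + t))) * ((1 + Real.exp l) ^ F.card * 2 ^ (Fintype.card ι - F.card)) := by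
    rw [← mgf_eq F σ l, Finset.mul_sum]
    refine Finset.sum_congr rfl fun ω _ => ?_
    rw [← Real.exp_add]; ring_nf
  have step3 : (1 + Real.exp l) ^ F.card ≤ 2 ^ F.card * Real.exp (m * (l / 2 + l ^ 2 / 8)) := by
    calc (1 + Real.exp l) ^ F.card ≤ (2 * Real.exp (l / 2 + l ^ 2 / 8)) ^ F.card := by
          apply pow_le_pow_left₀ (by positivity) (one_add_exp_le l)
      _ = 2 ^ F.card * Real.exp (m * (l / 2 + l ^ 2 / 8)) := by
          rw [mul_pow, ← Real.exp_nat_mul, hmdef]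
  have hcard : (2:ℝ) ^ F.card * 2 ^ (Fintype.card ι - F.card) = 2 ^ Fintype.card ι := by
    rw [← pow_add, Nat.add_sub_cancel' (Finset.card_le_univ F)]
  have step4 : Real.exp (-(l * (m / 2 + t))) * (2 ^ F.card * Real.exp (m * (l / 2 + l ^ 2 / 8)) * 2 ^ (Fintype.card ι - F.card))
      = 2 ^ Fintype.card ι * Real.exp (-2 * t ^ 2 / m) := by
    rw [show Real.exp (-(l * (m / 2 + t))) * (2 ^ F.card * Real.exp (m * (l / 2 + l ^ 2 / 8)) * 2 ^ (Fintype.card ι - F.card))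
        = (2 ^ F.card * 2 ^ (Fintype.card ι - F.card)) * (Real.exp (-(l * (m / 2 + t))) * Real.exp (m * (l / 2 + l ^ 2 / 8))) by ring]
    rw [hcard, ← Real.exp_add]
    congr 1
    rw [hldef]
    field_simp
    ring
  calc (S.card : ℝ) ≤ Real.exp (-(l * (m / 2 + t))) * ((1 + Real.exp l) ^ F.card * 2 ^ (Fintype.card ι - F.card)) := by
        rw [← step2]; exact step1
    _ ≤ Real.exp (-(l * (m / 2 + t))) * (2 ^ F.card * Real.exp (m * (l / 2 + l ^ 2 / 8)) * 2 ^ (Fintype.card ι - F.card)) := by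
        have he := Real.exp_pos (-(l * (m / 2 + t)))
        have h2p : (0:ℝ) ≤ 2 ^ (Fintype.card ι - F.card) := by positivity
        have := step3
        nlinarith [mul_le_mul_of_nonneg_right step3 h2p]
    _ = 2 ^ Fintype.card ι * Real.exp (-2 * t ^ 2 / m) := step4

lemma xcnt_add (F : Finset ι) (σ : ι → Bool) (ω : ι → Bool) :
    Xcnt F σ ω + Xcnt F (fun p => !σ p) ω = F.card := by
  rw [Xcnt, Xcnt]
  have h2 : F.filter (fun p => ω p = !σ p) = F.filter (fun p => ¬(ω p = σ p)) :=
    Finset.filter_congr fun p _ => by cases ω p <;> cases σ p <;> simp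
  rw [h2]
  exact Finset.card_filter_add_card_filter_not _

lemma two_tail (F : Finset ι) (σ : ι → Bool) (t : ℝ) (ht : 0 ≤ t) (hm : F.card ≠ 0) :
    (((univ : Finset (ι → Bool)).filter fun ω =>
        t < |(Xcnt F σ ω : ℝ) - (F.card : ℝ) / 2|).card : ℝ)
      ≤ 2 ^ (Fintype.card ι + 1) * Real.exp (-2 * t ^ 2 / F.card) := by
  set S1 := (univ : Finset (ι → Bool)).filter fun ω => (F.card : ℝ) / 2 + t < (Xcnt F σ ω : ℝ)
  set S2 := (univ : Finset (ι → Bool)).filter fun ω =>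
    (F.card : ℝ) / 2 + t < (Xcnt F (fun p => !σ p) ω : ℝ)
  have hsub : ((univ : Finset (ι → Bool)).filter fun ω =>
      t < |(Xcnt F σ ω : ℝ) - (F.card : ℝ) / 2|) ⊆ S1 ∪ S2 := by
    intro ω hω
    simp only [S1, S2, Finset.mem_filter, Finset.mem_univ, true_and, Finset.mem_union] at hω ⊢
    rcases lt_abs.mp hω with h | h
    · left; linarith
    · right
      have hadd := xcnt_add F σ ω
      have : (Xcnt F σ ω : ℝ) + (Xcnt F (fun p => !σ p) ω : ℝ) = (F.card : ℝ) := by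
        exact_mod_cast congrArg (Nat.cast : ℕ → ℝ) hadd
      linarith
  calc (((univ : Finset (ι → Bool)).filter fun ω =>
        t < |(Xcnt F σ ω : ℝ) - (F.card : ℝ) / 2|).card : ℝ)
      ≤ ((S1 ∪ S2).card : ℝ) := by exact_mod_cast Finset.card_le_card hsub
    _ ≤ (S1.card : ℝ) + (S2.card : ℝ) := by exact_mod_cast Finset.card_union_le S1 S2
    _ ≤ 2 ^ Fintype.card ι * Real.exp (-2 * t ^ 2 / F.card)
        + 2 ^ Fintype.card ι * Real.exp (-2 * t ^ 2 / F.card) :=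
        add_le_add (upper_tail F σ t ht hm) (upper_tail F (fun p => !σ p) t ht hm)
    _ = 2 ^ (Fintype.card ι + 1) * Real.exp (-2 * t ^ 2 / F.card) := by rw [pow_succ]; ring

end Tail

lemma choose_bound (n s : ℕ) (hs : 1 ≤ s) (hsn : s ≤ n) :
    ((n.choose s : ℕ) : ℝ) ≤ Real.exp ((s : ℝ) * Real.log (Real.exp 1 * n / s)) := by
  have hs0 : (0:ℝ) < (s:ℝ) := by exact_mod_cast hs
  have hn0 : (0:ℝ) < (n:ℝ) := lt_of_lt_of_le hs0 (by exact_mod_cast hsn)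
  have hq : (0:ℝ) < Real.exp 1 * n / s := by positivity
  have hfac : (0:ℝ) < (s.factorial : ℝ) := by exact_mod_cast Nat.factorial_pos s
  have h1 : ((n.choose s : ℕ) : ℝ) ≤ (n:ℝ) ^ s / (s.factorial : ℝ) := Nat.choose_le_pow_div s n
  have h2 : (s:ℝ) ^ s / (s.factorial : ℝ) ≤ Real.exp s := by
    have hsum := Real.sum_le_exp_of_nonneg hs0.le (s + 1)
    have hterm : (s:ℝ) ^ s / (s.factorial : ℝ)
        ≤ ∑ i ∈ Finset.range (s + 1), (s:ℝ) ^ i / (i.factorial : ℝ) := by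
      exact Finset.single_le_sum (f := fun i => (s:ℝ) ^ i / (i.factorial : ℝ))
        (fun i _ => by positivity) (Finset.self_mem_range_succ s)
    exact le_trans hterm hsum
  have h3 : (s:ℝ) ^ s ≤ Real.exp s * (s.factorial : ℝ) := by
    rw [div_le_iff₀ hfac] at h2; linarith
  have key : (n:ℝ) ^ s / (s.factorial : ℝ) ≤ (Real.exp 1 * n / s) ^ s := by
    rw [div_pow, mul_pow, Real.exp_one_pow]
    rw [div_le_div_iff₀ hfac (by positivity)]
    have hnp : (0:ℝ) ≤ (n:ℝ) ^ s := by positivity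
    calc (n:ℝ) ^ s * (s:ℝ) ^ s ≤ (n:ℝ) ^ s * (Real.exp s * (s.factorial : ℝ)) := by
          exact mul_le_mul_of_nonneg_left h3 hnp
      _ = Real.exp (s:ℝ) * (n:ℝ) ^ s * (s.factorial : ℝ) := by ring
  have hrw : (Real.exp 1 * n / s) ^ s = Real.exp ((s : ℝ) * Real.log (Real.exp 1 * n / s)) := by
    rw [← Real.exp_log hq, ← Real.exp_nat_mul, Real.exp_log hq]
  calc ((n.choose s : ℕ) : ℝ) ≤ (n:ℝ) ^ s / (s.factorial : ℝ) := h1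
    _ ≤ (Real.exp 1 * n / s) ^ s := key
    _ = Real.exp ((s : ℝ) * Real.log (Real.exp 1 * n / s)) := hrw

lemma one_le_log (n s : ℕ) (hs : 1 ≤ s) (hsn : s ≤ n) :
    1 ≤ Real.log (Real.exp 1 * n / s) := by
  have hs0 : (0:ℝ) < (s:ℝ) := by exact_mod_cast hs
  have hq : (0:ℝ) < Real.exp 1 * n / s := by
    have hn0 : (0:ℝ) < (n:ℝ) := lt_of_lt_of_le hs0 (by exact_mod_cast hsn)
    positivity
  rw [Real.le_log_iff_exp_le hq]
  rw [div_eq_mul_inv, mul_assoc]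
  nth_rewrite 1 [← mul_one (Real.exp 1)]
  apply mul_le_mul_of_nonneg_left _ (Real.exp_pos 1).le
  rw [← div_eq_mul_inv, le_div_iff₀ hs0, one_mul]
  exact_mod_cast hsn

variable {V : Type*} [Fintype V] [DecidableEq V]

/-- canonical coordinate of an unordered pair. -/
def kmap (e : V ≃ Fin (Fintype.card V)) (p : V × V) : V × V :=
  if (e p.1 : ℕ) < (e p.2 : ℕ) then p else p.swap

/-- the random orientation determined by coin flips `ω`. -/
def orient (H : SimpleGraph V) [DecidableRel H.Adj] (e : V ≃ Fin (Fintype.card V))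
    (ω : V × V → Bool) (a b : V) : Bool :=
  decide (H.Adj a b) && (if (e a : ℕ) < (e b : ℕ) then ω (a, b) else !(ω (b, a)))

lemma kmap_injOn (e : V ≃ Fin (Fintype.card V)) {A B : Finset V} (hd : Disjoint A B) :
    Set.InjOn (kmap e) (A ×ˢ B : Finset (V × V)) := by
  intro p hp q hq hpq
  simp only [Finset.coe_product, Set.mem_prod, Finset.mem_coe] at hp hq
  unfold kmap at hpq
  have hAB : ∀ x, x ∈ A → x ∉ B := fun x hx => Finset.disjoint_left.mp hd hx
  split_ifs at hpq with h1 h2 h2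
  · exact hpq
  · exfalso
    have : p.1 = q.2 := congrArg Prod.fst hpq ▸ rfl
    have h := congrArg Prod.fst hpq
    simp [Prod.swap] at h
    exact hAB p.1 hp.1 (h ▸ hq.2)
  · exfalso
    have h := congrArg Prod.fst hpq
    simp [Prod.swap] at h
    exact hAB q.1 hq.1 (h ▸ hp.2)
  · exact Prod.swap_injective hpq

lemma count_orient_eq (H : SimpleGraph V) [DecidableRel H.Adj]
    (e : V ≃ Fin (Fintype.card V)) (ω : V × V → Bool) {A B : Finset V} (hd : Disjoint A B) :
    ((A ×ˢ B).filter fun p => orient H e ω p.1 p.2 = true).card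
      = Xcnt (((A ×ˢ B).filter fun p => H.Adj p.1 p.2).image (kmap e))
          (fun q => decide (q.1 ∈ A)) ω := by
  classical
  set S := (A ×ˢ B).filter fun p => H.Adj p.1 p.2 with hS
  have hmemS : ∀ p ∈ S, p.1 ∈ A ∧ p.2 ∈ B := by
    intro p hp
    rw [hS, Finset.mem_filter, Finset.mem_product] at hp
    exact hp.1
  have hiff : ∀ p ∈ S, (orient H e ω p.1 p.2 = true)
      ↔ (ω (kmap e p) = decide ((kmap e p).1 ∈ A)) := by
    intro p hp
    obtain ⟨hpA, hpB⟩ := hmemS p hp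
    have hadj : H.Adj p.1 p.2 := by
      rw [hS, Finset.mem_filter] at hp; exact hp.2
    unfold orient kmap
    by_cases hlt : (e p.1 : ℕ) < (e p.2 : ℕ)
    · simp [hlt, hadj, hpA]
    · have hp2A : p.2 ∉ A := Finset.disjoint_right.mp hd hpB
      simp [hlt, hadj, hp2A, Prod.swap]
  -- LHS set equals S filtered by the bit condition
  have hset : (A ×ˢ B).filter (fun p => orient H e ω p.1 p.2 = true)
      = S.filter (fun p => ω (kmap e p) = decide ((kmap e p).1 ∈ A)) := by
    rw [hS, Finset.filter_filter]
    apply Finset.filter_congr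
    intro p hp
    constructor
    · intro h
      have hadj : H.Adj p.1 p.2 := by
        have := h
        unfold orient at this
        simp only [Bool.and_eq_true, decide_eq_true_eq] at this
        exact this.1
      refine ⟨hadj, ?_⟩
      exact (hiff p (by rw [hS, Finset.mem_filter]; exact ⟨hp, hadj⟩)).mp h
    · rintro ⟨hadj, hbit⟩
      exact (hiff p (by rw [hS, Finset.mem_filter]; exact ⟨hp, hadj⟩)).mpr hbit
  rw [hset, Xcnt, Finset.filter_image]
  refine (Finset.card_image_of_injOn ?_).symm
  apply Set.InjOn.mono _ (kmap_injOn e hd)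
  intro p hp
  simp only [Finset.mem_coe, Finset.mem_filter, hS, Finset.coe_product,
    Set.mem_prod, Finset.mem_product] at hp ⊢
  exact ⟨hp.1.1.1, hp.1.1.2⟩

lemma card_image_kmap (H : SimpleGraph V) [DecidableRel H.Adj]
    (e : V ≃ Fin (Fintype.card V)) {A B : Finset V} (hd : Disjoint A B) :
    (((A ×ˢ B).filter fun p => H.Adj p.1 p.2).image (kmap e)).card
      = ((A ×ˢ B).filter fun p => H.Adj p.1 p.2).card := by
  apply Finset.card_image_of_injOn
  apply Set.InjOn.mono _ (kmap_injOn e hd)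
  exact_mod_cast Finset.filter_subset _ _


section Main

variable {V : Type*} [Fintype V] [DecidableEq V]
variable (H : SimpleGraph V) [DecidableRel H.Adj]

/-- number of `H`-edges from `A` to `B` (ordered pairs). -/
def mH (A B : Finset V) : ℕ := ((A ×ˢ B).filter fun p => H.Adj p.1 p.2).card

/-- the discrepancy bound. -/
noncomputable def bnd (A B : Finset V) : ℝ :=
  3 * Real.sqrt (mH H A B) *
    Real.sqrt ((A.card : ℝ) * Real.log (Real.exp 1 * (Fintype.card V : ℝ) / (A.card : ℝ)))

/-- number of edges oriented from `A` to `B` under flips `ω`. -/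
def Xor' (e : V ≃ Fin (Fintype.card V)) (ω : V × V → Bool) (A B : Finset V) : ℕ :=
  ((A ×ˢ B).filter fun p => orient H e ω p.1 p.2 = true).card

/-- the set of coin flips that are bad for the pair `(A, B)`. -/
noncomputable def badSet (e : V ≃ Fin (Fintype.card V)) (A B : Finset V) :
    Finset (V × V → Bool) :=
  (univ : Finset (V × V → Bool)).filter fun ω =>
    bnd H A B < |(Xor' H e ω A B : ℝ) - (mH H A B : ℝ) / 2|

lemma badSet_card (e : V ≃ Fin (Fintype.card V)) {A B : Finset V}
    (hd : Disjoint A B) (hs1 : 1 ≤ A.card) :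
    ((badSet H e A B).card : ℝ)
      ≤ 2 ^ (Fintype.card (V × V) + 1)
          * Real.exp (-18 * (A.card : ℝ)
              * Real.log (Real.exp 1 * (Fintype.card V : ℝ) / (A.card : ℝ))) := by
  classical
  have hsn : A.card ≤ Fintype.card V := by
    simpa using Finset.card_le_univ A
  have hL : 1 ≤ Real.log (Real.exp 1 * (Fintype.card V : ℝ) / (A.card : ℝ)) :=
    one_le_log _ _ hs1 hsn
  set L := Real.log (Real.exp 1 * (Fintype.card V : ℝ) / (A.card : ℝ)) with hLdef
  by_cases hm : mH H A B = 0
  · have hbad : badSet H e A B = ∅ := by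
      rw [badSet, Finset.filter_false_of_mem]
      intro ω _
      have hX : Xor' H e ω A B = 0 := by
        rw [Xor']
        rw [← Nat.le_zero, ← hm, mH]
        apply Finset.card_le_card
        intro p hp
        rw [Finset.mem_filter] at hp ⊢
        refine ⟨hp.1, ?_⟩
        have h2 := hp.2
        rw [orient, Bool.and_eq_true, decide_eq_true_eq] at h2
        exact h2.1
      rw [hX, hm]
      simp only [Nat.cast_zero, zero_div, sub_zero, abs_zero, not_lt]
      rw [bnd]
      positivity
    rw [hbad]
    simp only [Finset.card_empty, Nat.cast_zero]
    positivity
  · set F := (((A ×ˢ B).filter fun p => H.Adj p.1 p.2).image (kmap e)) with hFdef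
    set σ : V × V → Bool := fun q => decide (q.1 ∈ A) with hσdef
    have hFcard : F.card = mH H A B := card_image_kmap H e hd
    have hFne : F.card ≠ 0 := by rw [hFcard]; exact hm
    have hX : ∀ ω, Xor' H e ω A B = Xcnt F σ ω := fun ω => count_orient_eq H e ω hd
    have hset : badSet H e A B
        = (univ : Finset (V × V → Bool)).filter fun ω =>
            bnd H A B < |(Xcnt F σ ω : ℝ) - (F.card : ℝ) / 2| := by
      rw [badSet]
      apply Finset.filter_congr
      intro ω _
      rw [hX ω, hFcard]
    have hbnd0 : 0 ≤ bnd H A B := by rw [bnd]; positivity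
    have htail := two_tail F σ (bnd H A B) hbnd0 hFne
    rw [hset]
    refine le_trans htail (le_of_eq ?_)
    congr 1
    have hsL : (0:ℝ) ≤ (A.card : ℝ) * L := by
      have : (0:ℝ) ≤ (A.card : ℝ) := Nat.cast_nonneg _
      nlinarith
    have hmpos : (0:ℝ) < (mH H A B : ℝ) := by
      exact_mod_cast Nat.pos_of_ne_zero hm
    have hbndsq : (bnd H A B) ^ 2 = 9 * (mH H A B : ℝ) * ((A.card : ℝ) * L) := by
      rw [bnd, ← hLdef, mul_pow, mul_pow]
      rw [Real.sq_sqrt (Nat.cast_nonneg _), Real.sq_sqrt hsL]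
      ring
    rw [hbndsq, hFcard]
    field_simp
    ring

lemma geom_sum_le (n : ℕ) : ∑ s ∈ Finset.Icc 1 n, (1/4 : ℝ) ^ s ≤ 1/3 := by
  have key : ∀ n : ℕ, ∑ s ∈ Finset.Icc 1 n, (1/4 : ℝ) ^ s = (1 - (1/4 : ℝ) ^ n) / 3 := by
    intro n
    induction n with
    | zero => simp
    | succ k ih =>
      rw [Finset.sum_Icc_succ_top (by omega), ih]
      ring
  rw [key]
  have : (0:ℝ) ≤ (1/4 : ℝ) ^ n := by positivity
  linarith

lemma term_bound (n s κ : ℕ) (hs : 1 ≤ s) (hsn : s ≤ n) :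
    (((n.choose s : ℕ) : ℝ)) ^ 2
        * (2 ^ (κ + 1) * Real.exp (-18 * (s : ℝ) * Real.log (Real.exp 1 * n / s)))
      ≤ 2 ^ (κ + 1) * (1/4 : ℝ) ^ s := by
  set L := Real.log (Real.exp 1 * (n : ℝ) / (s : ℝ)) with hL
  have hL1 : 1 ≤ L := one_le_log n s hs hsn
  have hc := choose_bound n s hs hsn
  have hc0 : (0:ℝ) ≤ ((n.choose s : ℕ) : ℝ) := Nat.cast_nonneg _
  have h2 : (((n.choose s : ℕ) : ℝ)) ^ 2 ≤ Real.exp (2 * (s : ℝ) * L) := by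
    calc (((n.choose s : ℕ) : ℝ)) ^ 2 ≤ (Real.exp ((s : ℝ) * L)) ^ 2 := by
          apply pow_le_pow_left₀ hc0 hc
      _ = Real.exp (2 * (s : ℝ) * L) := by rw [← Real.exp_nat_mul]; push_cast; ring_nf
  have hexp : Real.exp (2 * (s : ℝ) * L) * Real.exp (-18 * (s : ℝ) * L)
      = Real.exp (-16 * ((s : ℝ) * L)) := by
    rw [← Real.exp_add]; ring_nf
  have hmono : Real.exp (-16 * ((s : ℝ) * L)) ≤ Real.exp (-16 * (s : ℝ)) := by
    apply Real.exp_le_exp.mpr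
    have hs0 : (0:ℝ) ≤ (s : ℝ) := Nat.cast_nonneg _
    nlinarith
  have hq : Real.exp (-16 * (s : ℝ)) ≤ (1/4 : ℝ) ^ s := by
    rw [show (-16 : ℝ) * (s : ℝ) = (s : ℕ) * (-16 : ℝ) by push_cast; ring,
      Real.exp_nat_mul]
    apply pow_le_pow_left₀ (Real.exp_nonneg _)
    rw [Real.exp_neg]
    rw [inv_le_comm₀ (Real.exp_pos _) (by norm_num)]
    calc (1/4 : ℝ)⁻¹ = 4 := by norm_num
      _ ≤ 17 := by norm_num
      _ ≤ Real.exp 16 := by nlinarith [Real.add_one_le_exp (16 : ℝ)]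
  have h2p : (0:ℝ) < 2 ^ (κ + 1) := by positivity
  calc (((n.choose s : ℕ) : ℝ)) ^ 2 * (2 ^ (κ + 1) * Real.exp (-18 * (s : ℝ) * L))
      ≤ Real.exp (2 * (s : ℝ) * L) * (2 ^ (κ + 1) * Real.exp (-18 * (s : ℝ) * L)) := by
        apply mul_le_mul_of_nonneg_right h2
        positivity
    _ = 2 ^ (κ + 1) * (Real.exp (2 * (s : ℝ) * L) * Real.exp (-18 * (s : ℝ) * L)) := by ring
    _ = 2 ^ (κ + 1) * Real.exp (-16 * ((s : ℝ) * L)) := by rw [hexp]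
    _ ≤ 2 ^ (κ + 1) * Real.exp (-16 * (s : ℝ)) := by
        apply mul_le_mul_of_nonneg_left hmono h2p.le
    _ ≤ 2 ^ (κ + 1) * (1/4 : ℝ) ^ s := by
        apply mul_le_mul_of_nonneg_left hq h2p.le

end Main

end Stmt15Aux

end Stmt15AuxSec

open Stmt15Aux

/-- every undirected graph `H` on `n` vertices admits an orientation `G` such
that for every `s ∈ [n]` and all disjoint `A, B` with `|A| = |B| = s`,
`|e_G(A,B) - ē(A,B)/2| ≤ 3 √(ē(A,B)) √(s log(en/s))`. -/
theorem stmt15 {V : Type*} [Fintype V] [DecidableEq V] (H : SimpleGraph V)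
    [DecidableRel H.Adj] :
    ∃ E : V → V → Bool,
      (∀ a b, H.Adj a b ↔ (E a b = true ∨ E b a = true)) ∧
      (∀ a b, ¬ (E a b = true ∧ E b a = true)) ∧
      ∀ s : ℕ, 1 ≤ s → s ≤ Fintype.card V →
        ∀ A B : Finset V, Disjoint A B → A.card = s → B.card = s →
          |(((A ×ˢ B).filter fun p => E p.1 p.2 = true).card : ℝ)
              - (((A ×ˢ B).filter fun p => H.Adj p.1 p.2).card : ℝ) / 2|
            ≤ 3 * Real.sqrt (((A ×ˢ B).filter fun p => H.Adj p.1 p.2).card)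
                * Real.sqrt ((s : ℝ) *
                    Real.log (Real.exp 1 * (Fintype.card V : ℝ) / (s : ℝ))) := by
  classical
  set n := Fintype.card V with hn
  set κ := Fintype.card (V × V) with hκ
  set e := Fintype.equivFin V with he
  set P : Finset (Finset V × Finset V) :=
    (univ : Finset (Finset V × Finset V)).filter
      (fun AB => Disjoint AB.1 AB.2 ∧ AB.2.card = AB.1.card ∧ 1 ≤ AB.1.card) with hP
  set Bad : Finset (V × V → Bool) :=
    P.biUnion (fun AB => badSet H e AB.1 AB.2) with hBad
  -- counting the bad coin flips
  have hsum1 : (Bad.card : ℝ) ≤ ∑ AB ∈ P, ((badSet H e AB.1 AB.2).card : ℝ) := by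
    rw [hBad]
    exact_mod_cast Finset.card_biUnion_le
  have hAB : ∀ AB ∈ P, ((badSet H e AB.1 AB.2).card : ℝ)
      ≤ 2 ^ (κ + 1) * Real.exp (-18 * (AB.1.card : ℝ)
          * Real.log (Real.exp 1 * (n : ℝ) / (AB.1.card : ℝ))) := by
    intro AB hABP
    rw [hP, Finset.mem_filter] at hABP
    exact badSet_card H e hABP.2.1 hABP.2.2.2
  set g : ℕ → ℝ := fun s => 2 ^ (κ + 1)
      * Real.exp (-18 * (s : ℝ) * Real.log (Real.exp 1 * (n : ℝ) / (s : ℝ))) with hg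
  have hsum2 : (Bad.card : ℝ) ≤ ∑ AB ∈ P, g AB.1.card :=
    le_trans hsum1 (Finset.sum_le_sum hAB)
  have hmaps : ∀ AB ∈ P, AB.1.card ∈ Finset.Icc 1 n := by
    intro AB hABP
    rw [hP, Finset.mem_filter] at hABP
    exact Finset.mem_Icc.mpr ⟨hABP.2.2.2, by simpa using Finset.card_le_univ AB.1⟩
  have hgroup : ∑ AB ∈ P, g AB.1.card
      = ∑ s ∈ Finset.Icc 1 n, ∑ AB ∈ P.filter (fun AB => AB.1.card = s), g AB.1.card :=
    (Finset.sum_fiberwise_of_maps_to hmaps _).symm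
  have hinner : ∀ s ∈ Finset.Icc 1 n,
      ∑ AB ∈ P.filter (fun AB => AB.1.card = s), g AB.1.card
        ≤ 2 ^ (κ + 1) * (1/4 : ℝ) ^ s := by
    intro s hsIcc
    rw [Finset.mem_Icc] at hsIcc
    have hconst1 : ∑ AB ∈ P.filter (fun AB => AB.1.card = s), g AB.1.card
        = ∑ _AB ∈ P.filter (fun AB => AB.1.card = s), g s :=
      Finset.sum_congr rfl (fun AB hABf => congrArg g (Finset.mem_filter.mp hABf).2)
    rw [hconst1, Finset.sum_const, nsmul_eq_mul]
    have hcount : (P.filter (fun AB => AB.1.card = s)).card ≤ (n.choose s) ^ 2 := by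
      have hsub : P.filter (fun AB => AB.1.card = s)
          ⊆ (Finset.powersetCard s (univ : Finset V))
              ×ˢ (Finset.powersetCard s (univ : Finset V)) := by
        intro AB hABf
        rw [Finset.mem_filter, hP, Finset.mem_filter] at hABf
        rw [Finset.mem_product, Finset.mem_powersetCard_univ, Finset.mem_powersetCard_univ]
        exact ⟨hABf.2, by rw [hABf.1.2.2.1, hABf.2]⟩
      calc (P.filter (fun AB => AB.1.card = s)).card
          ≤ _ := Finset.card_le_card hsub
        _ = (n.choose s) ^ 2 := by
            rw [Finset.card_product, Finset.card_powersetCard, Finset.card_univ, ← hn, sq]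
    have hg0 : 0 ≤ g s := by rw [hg]; positivity
    calc ((P.filter (fun AB => AB.1.card = s)).card : ℝ) * g s
        ≤ ((n.choose s : ℕ) : ℝ) ^ 2 * g s := by
          apply mul_le_mul_of_nonneg_right _ hg0
          exact_mod_cast hcount
      _ ≤ 2 ^ (κ + 1) * (1/4 : ℝ) ^ s := term_bound n s κ hsIcc.1 hsIcc.2
  have hsum3 : (Bad.card : ℝ) ≤ 2 ^ (κ + 1) * (1/3 : ℝ) := by
    calc (Bad.card : ℝ) ≤ ∑ AB ∈ P, g AB.1.card := hsum2
      _ = ∑ s ∈ Finset.Icc 1 n, ∑ AB ∈ P.filter (fun AB => AB.1.card = s), g AB.1.card :=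
        hgroup
      _ ≤ ∑ s ∈ Finset.Icc 1 n, 2 ^ (κ + 1) * (1/4 : ℝ) ^ s := Finset.sum_le_sum hinner
      _ = 2 ^ (κ + 1) * ∑ s ∈ Finset.Icc 1 n, (1/4 : ℝ) ^ s := by rw [Finset.mul_sum]
      _ ≤ 2 ^ (κ + 1) * (1/3 : ℝ) := by
          apply mul_le_mul_of_nonneg_left (geom_sum_le n) (by positivity)
  have hcard_univ : (((univ : Finset (V × V → Bool)).card : ℕ) : ℝ) = 2 ^ κ := by
    rw [Finset.card_univ, hκ]
    rw [show Fintype.card (V × V → Bool) = Fintype.card Bool ^ Fintype.card (V × V) from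
      Fintype.card_fun]
    push_cast [Fintype.card_bool]
    ring
  have hlt : Bad.card < (univ : Finset (V × V → Bool)).card := by
    have h2k : (0:ℝ) < 2 ^ κ := by positivity
    have : (Bad.card : ℝ) < ((univ : Finset (V × V → Bool)).card : ℝ) := by
      rw [hcard_univ]
      calc (Bad.card : ℝ) ≤ 2 ^ (κ + 1) * (1/3 : ℝ) := hsum3
        _ < 2 ^ κ := by rw [pow_succ]; nlinarith
    exact_mod_cast this
  obtain ⟨ω, hω⟩ : ∃ ω : V × V → Bool, ω ∉ Bad := by
    by_contra h
    push_neg at h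
    exact absurd (Finset.card_le_card fun x _ => h x) (not_le.mpr hlt)
  refine ⟨orient H e ω, ?_, ?_, ?_⟩
  · -- orientation covers exactly the edges
    intro a b
    constructor
    · intro hadj
      have hne : a ≠ b := hadj.ne
      have hfne : (e a : ℕ) ≠ (e b : ℕ) := fun h => hne (e.injective (Fin.val_injective h))
      rcases hfne.lt_or_gt with h | h
      · cases hw : ω (a, b)
        · right
          simp [Stmt15Aux.orient, hadj.symm, not_lt.mpr h.le, hw]
        · left
          simp [Stmt15Aux.orient, hadj, h, hw]
      · cases hw : ω (b, a)
        · left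
          simp [Stmt15Aux.orient, hadj, not_lt.mpr h.le, hw]
        · right
          simp [Stmt15Aux.orient, hadj.symm, h, hw]
    · rintro (h | h)
      · simp only [Stmt15Aux.orient, Bool.and_eq_true, decide_eq_true_eq] at h
        exact h.1
      · simp only [Stmt15Aux.orient, Bool.and_eq_true, decide_eq_true_eq] at h
        exact h.1.symm
  · -- no edge in both directions
    rintro a b ⟨h1, h2⟩
    simp only [Stmt15Aux.orient, Bool.and_eq_true, decide_eq_true_eq] at h1 h2
    have hadj := h1.1
    have hne : a ≠ b := hadj.ne
    have hfne : (e a : ℕ) ≠ (e b : ℕ) := fun h => hne (e.injective (Fin.val_injective h))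
    rcases hfne.lt_or_gt with h | h
    · rw [if_pos h] at h1
      rw [if_neg (not_lt.mpr h.le)] at h2
      rw [h1.2] at h2
      simp at h2
    · rw [if_neg (not_lt.mpr h.le)] at h1
      rw [if_pos h] at h2
      rw [h2.2] at h1
      simp at h1
  · -- the discrepancy bound
    intro s hs1 hsn A B hd hA hB
    have hPmem : (A, B) ∈ P := by
      rw [hP, Finset.mem_filter]
      exact ⟨Finset.mem_univ _, hd, by rw [hA, hB], by rw [hA]; exact hs1⟩
    have hnot : ω ∉ badSet H e A B :=
      fun hmem => hω (Finset.mem_biUnion.mpr ⟨(A, B), hPmem, hmem⟩)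
    rw [Stmt15Aux.badSet, Finset.mem_filter] at hnot
    push_neg at hnot
    have hle := hnot (Finset.mem_univ ω)
    subst hA
    simpa [Stmt15Aux.Xor', Stmt15Aux.mH, Stmt15Aux.bnd] using hle
end

section
/- Suppose that every r-free digraph G on n vertices satisfies β(G) = O(1) (bounded by an absolute constant). Then r = Ω(n). More precisely, for any integer r ≥ 3 with r+1 dividing n, there is an r-free digraph G on n vertices with β(G) ≥ n²/(r+1)², so if n²/(r+1)² ≤ C then r+1 ≥ n/√C. -/
open Finset

section Blowup

variable (r m : ℕ)

/-- The balanced blowup of a directed `(r+1)`-cycle. -/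
def blowE (p q : ZMod (r+1) × Fin m) : Prop := q.1 = p.1 + 1

lemma blow_no_short_cycle :
    ∀ l : ℕ, 1 ≤ l → l ≤ r → ¬ hasDirCycleLen (blowE r m) l := by
  haveI : NeZero (r+1) := ⟨r.succ_ne_zero⟩
  rintro l h1 h2 ⟨hl, v, hv⟩
  have key : ∀ k (hk : k < l), (v ⟨k, hk⟩).1 = (v ⟨0, hl⟩).1 + (k : ZMod (r+1)) := by
    intro k
    induction k with
    | zero => intro hk; simp
    | succ k ih =>
      intro hk
      have hk' : k < l := Nat.lt_of_succ_lt hk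
      have he := hv ⟨k, hk'⟩
      simp only [blowE] at he
      have hvv : (v ⟨(k+1) % l, Nat.mod_lt _ hl⟩) = v ⟨k+1, hk⟩ := by
        congr 1
        exact Fin.ext (Nat.mod_eq_of_lt hk)
      rw [hvv] at he
      rw [he, ih hk']
      push_cast
      ring
  have he := hv ⟨l - 1, by omega⟩
  simp only [blowE] at he
  have hv0 : (v ⟨(l - 1 + 1) % l, Nat.mod_lt _ hl⟩) = v ⟨0, hl⟩ := by
    congr 1
    apply Fin.ext
    show (l - 1 + 1) % l = 0
    have : l - 1 + 1 = l := by omega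
    rw [this, Nat.mod_self]
  rw [hv0, key (l-1) (by omega)] at he
  have h0 : (v ⟨0,hl⟩).1 + 0 = (v ⟨0,hl⟩).1 + (((l-1 : ℕ) : ZMod (r+1)) + 1) := by
    rw [add_zero, ← add_assoc]; exact he
  have h1' : ((l-1 : ℕ) : ZMod (r+1)) + 1 = 0 := (add_left_cancel h0).symm
  have hzero : ((l : ℕ) : ZMod (r+1)) = 0 := by
    have hc : ((l - 1 : ℕ) : ZMod (r+1)) = (l : ZMod (r+1)) - 1 := by
      rw [Nat.cast_sub (by omega)]; simp
    rw [hc] at h1'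
    rw [← h1']; ring
  have hdvd := (ZMod.natCast_eq_zero_iff l (r+1)).mp hzero
  have := Nat.le_of_dvd (by omega) hdvd
  omega

lemma blow_fas_lower (S : Finset ((ZMod (r+1) × Fin m) × (ZMod (r+1) × Fin m)))
    (hS : IsFAS (blowE r m) S) (hr : 3 ≤ r) : m ^ 2 ≤ S.card := by
  haveI : NeZero (r+1) := ⟨r.succ_ne_zero⟩
  rcases Nat.eq_zero_or_pos m with hm | hm
  · simp [hm, pow_succ]
  -- Step A: every transversal tuple contains an edge of S
  have stepA : ∀ f : ZMod (r+1) → Fin m, ∃ i : ZMod (r+1),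
      (((i, f i) : ZMod (r+1) × Fin m), ((i+1, f (i+1)) : ZMod (r+1) × Fin m)) ∈ S := by
    intro f
    by_contra hcon
    push_neg at hcon
    apply hS.2
    refine ⟨r+1, Nat.succ_pos r, fun k => (((k.1 : ℕ) : ZMod (r+1)), f ((k.1 : ℕ) : ZMod (r+1))), ?_⟩
    intro i
    have hcj : ((((i.1+1) % (r+1) : ℕ)) : ZMod (r+1)) = ((i.1 : ℕ) : ZMod (r+1)) + 1 := by
      rw [ZMod.natCast_mod]; push_cast; ring
    refine ⟨?_, ?_⟩
    · exact hcj
    · simp only [hcj]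
      exact hcon ((i.1 : ℕ) : ZMod (r+1))
  choose idx hidx using stepA
  -- Step B: injection into S × (Fin (r-1) → Fin m)
  set Φ : (ZMod (r+1) → Fin m) → {x // x ∈ S} × (Fin (r-1) → Fin m) :=
    fun f => (⟨_, hidx f⟩, fun k => f (idx f + 2 + ((k.1 : ℕ) : ZMod (r+1)))) with hΦ
  have hinj : Function.Injective Φ := by
    intro f g hfg
    have he : (((idx f, f (idx f)) : ZMod (r+1) × Fin m), ((idx f + 1, f (idx f + 1)) : ZMod (r+1) × Fin m))
        = ((idx g, g (idx g)), (idx g + 1, g (idx g + 1))) :=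
      Subtype.ext_iff.mp (congrArg Prod.fst hfg)
    have hi : idx f = idx g := congrArg (fun x => x.1.1) he
    have hfi : f (idx f) = g (idx g) := congrArg (fun x => x.1.2) he
    have hfi1 : f (idx f + 1) = g (idx g + 1) := congrArg (fun x => x.2.2) he
    have hrest : ∀ k : Fin (r-1), f (idx f + 2 + ((k.1 : ℕ) : ZMod (r+1)))
        = g (idx g + 2 + ((k.1 : ℕ) : ZMod (r+1))) :=
      fun k => congrFun (congrArg Prod.snd hfg) k
    rw [hi] at hfi hfi1 hrest
    funext j
    by_cases h0 : j = idx g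
    · rw [h0]; exact hfi
    by_cases h1 : j = idx g + 1
    · rw [h1]; exact hfi1
    have hcast : (((j - idx g).val : ℕ) : ZMod (r+1)) = j - idx g :=
      ZMod.natCast_rightInverse _
    set t := (j - idx g).val with ht
    have htlt : t < r+1 := ZMod.val_lt _
    have ht0 : t ≠ 0 := by
      intro hcon
      apply h0
      have : j - idx g = 0 := (ZMod.val_eq_zero _).mp hcon
      have := sub_eq_zero.mp this
      exact this
    have ht1 : t ≠ 1 := by
      intro hcon
      apply h1
      rw [hcon] at hcast
      have : j - idx g = 1 := by rw [← hcast]; simp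
      have := sub_eq_iff_eq_add.mp this
      rw [this]; ring
    have h2t : 2 ≤ t := by omega
    have keq : idx g + 2 + (((t - 2 : ℕ)) : ZMod (r+1)) = j := by
      have hc2 : (((t - 2 : ℕ)) : ZMod (r+1)) = ((t : ℕ) : ZMod (r+1)) - 2 := by
        rw [Nat.cast_sub h2t]; push_cast; ring
      rw [hc2, hcast]; ring
    have := hrest ⟨t - 2, by omega⟩
    rw [keq] at this
    exact this
  have hcard := Fintype.card_le_of_injective Φ hinj
  simp only [Fintype.card_fun, Fintype.card_prod, Fintype.card_coe,
    ZMod.card, Fintype.card_fin] at hcard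
  have hrw : m ^ 2 * m ^ (r - 1) = m ^ (r + 1) := by
    rw [← pow_add]; congr 1; omega
  have hcard' : m ^ 2 * m ^ (r - 1) ≤ S.card * m ^ (r - 1) := by
    rw [hrw]; exact hcard
  exact Nat.le_of_mul_le_mul_right hcard' (Nat.pow_pos (n := _) hm)

end Blowup

/-- for `r ≥ 3` with `(r+1) ∣ n` there is an `r`-free digraph on `n` vertices
with `β(G) ≥ n²/(r+1)²`; hence if `n²/(r+1)² ≤ C` then `r + 1 ≥ n/√C`. -/
theorem stmt16 (r n : ℕ) (hr : 3 ≤ r) (hdvd : (r + 1) ∣ n) :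
    (∃ (V : Type) (i1 : Fintype V) (i2 : DecidableEq V) (E : V → V → Prop),
      Fintype.card V = n ∧
      (∀ l : ℕ, 1 ≤ l → l ≤ r → ¬ hasDirCycleLen E l) ∧
      n ^ 2 / (r + 1) ^ 2 ≤ beta E)
    ∧ ∀ C : ℝ, 0 < C → (n : ℝ) ^ 2 / ((r : ℝ) + 1) ^ 2 ≤ C →
        (n : ℝ) / Real.sqrt C ≤ (r : ℝ) + 1 := by
  haveI : NeZero (r+1) := ⟨r.succ_ne_zero⟩
  obtain ⟨m, hm⟩ := hdvd
  constructor
  · refine ⟨ZMod (r+1) × Fin m, inferInstance, inferInstance, blowE r m, ?_, blow_no_short_cycle r m, ?_⟩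
    · rw [Fintype.card_prod, ZMod.card, Fintype.card_fin, hm]
    · have hdiv : n ^ 2 / (r + 1) ^ 2 = m ^ 2 := by
        rw [hm, mul_pow, Nat.mul_div_cancel_left _ (by positivity)]
      rw [hdiv]
      -- beta is attained
      have hne : {k | ∃ S : Finset ((ZMod (r+1) × Fin m) × (ZMod (r+1) × Fin m)),
          IsFAS (blowE r m) S ∧ S.card = k}.Nonempty := by
        classical
        refine ⟨_, (univ.filter fun p => blowE r m p.1 p.2), ⟨?_, ?_⟩, rfl⟩
        · intro e he
          exact (mem_filter.mp he).2
        · rintro ⟨l, hl, v, hv⟩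
          have := hv ⟨0, hl⟩
          exact this.2 (mem_filter.mpr ⟨mem_univ _, this.1⟩)
      obtain ⟨S, hS, hScard⟩ := Nat.sInf_mem hne
      rw [beta, ← hScard]
      exact blow_fas_lower r m S hS hr
  · intro C hC hle
    have hs : (0:ℝ) < Real.sqrt C := Real.sqrt_pos.mpr hC
    rw [div_le_iff₀ hs]
    have hr1 : (0:ℝ) < ((r:ℝ)+1)^2 := by positivity
    have h1 : (n:ℝ)^2 ≤ C * ((r:ℝ)+1)^2 := by
      have := mul_le_mul_of_nonneg_right hle hr1.le
      rwa [div_mul_cancel₀ _ (ne_of_gt hr1)] at this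
    have h2 : (n:ℝ) ≤ Real.sqrt (C * ((r:ℝ)+1)^2) := by
      have h3 := Real.sqrt_le_sqrt h1
      rwa [Real.sqrt_sq (by positivity)] at h3
    rw [Real.sqrt_mul hC.le, Real.sqrt_sq (by positivity)] at h2
    nlinarith [h2]
end

section
/- Let G be a digraph on vertex set V with m edges, and suppose there exist disjoint sets A, B ⊆ V with e(A,B) − e(B,A) = τ*(G). Then there exists a linear ordering of V in which the number of forward edges exceeds the number of backward edges by at least τ*(G); consequently β(G) ≤ (m − τ*(G))/2. -/
open Finset

section MyAux


section Aux2
variable {V : Type*} [Fintype V] [DecidableEq V]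
variable (E : V → V → Prop) [DecidableRel E]

def Dsum (g : V → ℤ) (U : Finset V) : ℤ :=
  ∑ v ∈ U, ∑ w ∈ U, if E v w then (if g v < g w then 1 else -1) else 0

lemma eAB_eq_sum (A B : Finset V) :
    (eAB E A B : ℤ) = ∑ a ∈ A, ∑ b ∈ B, if E a b then (1:ℤ) else 0 := by
  unfold eAB
  rw [Finset.card_filter]
  rw [Finset.sum_product]
  push_cast
  rfl
end Aux2

section Aux3
variable {V : Type*} [Fintype V] [DecidableEq V]
variable (E : V → V → Prop) [DecidableRel E]



lemma Dsum_neg (hirr : ∀ v, ¬ E v v) (g : V → ℤ) (U : Finset V)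
    (hg : Set.InjOn g U) : Dsum E (fun v => - g v) U = - Dsum E g U := by
  unfold Dsum
  rw [← Finset.sum_neg_distrib]
  refine Finset.sum_congr rfl fun v hv => ?_
  rw [← Finset.sum_neg_distrib]
  refine Finset.sum_congr rfl fun w hw => ?_
  by_cases hE : E v w
  · have hne : v ≠ w := by rintro rfl; exact hirr v hE
    have hgne : g v ≠ g w := fun h => hne (hg hv hw h)
    simp only [hE, if_true, neg_lt_neg_iff]
    rcases lt_trichotomy (g v) (g w) with h | h | h
    · simp [h, not_lt.mpr h.le]
    · exact absurd h hgne
    · simp [h, not_lt.mpr h.le]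
  · simp [hE]

lemma exists_nonneg (hirr : ∀ v, ¬ E v v) (U : Finset V) :
    ∃ g : V → ℤ, Set.InjOn g U ∧ 0 ≤ Dsum E g U ∧ ∀ v, |g v| ≤ Fintype.card V := by
  set g0 : V → ℤ := fun v => ((Fintype.equivFin V v : ℕ) : ℤ) with hg0
  have hinj : Function.Injective g0 := by
    intro a b h
    have h' : ((Fintype.equivFin V a : ℕ) : ℤ) = ((Fintype.equivFin V b : ℕ) : ℤ) := h
    exact (Fintype.equivFin V).injective (Fin.ext (by exact_mod_cast h'))
  have hbd : ∀ v, |g0 v| ≤ Fintype.card V := by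
    intro v
    have h1 : (0:ℤ) ≤ g0 v := by positivity
    have h2 : g0 v ≤ Fintype.card V := by
      have h2' := (Fintype.equivFin V v).2
      have : ((Fintype.equivFin V v : ℕ) : ℤ) ≤ Fintype.card V := by exact_mod_cast h2'.le
      exact this
    rw [abs_of_nonneg h1]; exact h2
  rcases le_or_gt 0 (Dsum E g0 U) with h | h
  · exact ⟨g0, hinj.injOn, h, hbd⟩
  · refine ⟨fun v => - g0 v, fun a ha b hb hab => hinj (by simpa using neg_injective hab), ?_, ?_⟩
    · rw [Dsum_neg E hirr g0 U hinj.injOn]; linarith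
    · intro v; rw [abs_neg]; exact hbd v

lemma Dsum_congr (g g' : V → ℤ) (U : Finset V) (h : ∀ v ∈ U, g v = g' v) :
    Dsum E g U = Dsum E g' U := by
  unfold Dsum
  refine Finset.sum_congr rfl fun v hv => Finset.sum_congr rfl fun w hw => ?_
  rw [h v hv, h w hw]

lemma Dsum_base (hirr : ∀ v, ¬ E v v) (A B : Finset V) (hAB : Disjoint A B) :
    ∃ g : V → ℤ, Set.InjOn g ↑(A ∪ B) ∧
      (eAB E A B : ℤ) - (eAB E B A : ℤ) ≤ Dsum E g (A ∪ B) := by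
  obtain ⟨gA, hgAinj, hgA, hgAbd⟩ := exists_nonneg E hirr A
  obtain ⟨gB, hgBinj, hgB, hgBbd⟩ := exists_nonneg E hirr B
  set n : ℤ := (Fintype.card V : ℤ) with hn
  set K : ℤ := 3 * n + 1 with hK
  set g : V → ℤ := fun v => if v ∈ A then gA v else gB v + K with hg
  have hgA' : ∀ v ∈ A, g v = gA v := fun v hv => by simp [hg, hv]
  have hgB' : ∀ v ∈ B, g v = gB v + K := fun v hv => by
    have : v ∉ A := Finset.disjoint_right.mp hAB hv
    simp [hg, this]
  have hlt : ∀ a ∈ A, ∀ b ∈ B, g a < g b := by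
    intro a ha b hb
    rw [hgA' a ha, hgB' b hb]
    have h1 : gA a ≤ n := le_trans (le_abs_self _) (hgAbd a)
    have h2 : -n ≤ gB b := le_trans (neg_le_neg (hgBbd b)) (neg_abs_le _)
    have hn0 : 0 ≤ n := by positivity
    linarith
  have hinj : Set.InjOn g ↑(A ∪ B) := by
    intro x hx y hy hxy
    simp only [Finset.coe_union, Set.mem_union, Finset.mem_coe] at hx hy
    rcases hx with hx | hx <;> rcases hy with hy | hy
    · exact hgAinj hx hy (by rwa [hgA' x hx, hgA' y hy] at hxy)
    · exact absurd hxy (ne_of_lt (hlt x hx y hy))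
    · exact absurd hxy.symm (ne_of_lt (hlt y hy x hx))
    · exact hgBinj hx hy (by rw [hgB' x hx, hgB' y hy] at hxy; linarith)
  refine ⟨g, hinj, ?_⟩
  have hsplit : Dsum E g (A ∪ B) =
      (∑ v ∈ A, ∑ w ∈ A, if E v w then (if g v < g w then (1:ℤ) else -1) else 0)
      + (∑ v ∈ A, ∑ w ∈ B, if E v w then (if g v < g w then (1:ℤ) else -1) else 0)
      + (∑ v ∈ B, ∑ w ∈ A, if E v w then (if g v < g w then (1:ℤ) else -1) else 0)
      + (∑ v ∈ B, ∑ w ∈ B, if E v w then (if g v < g w then (1:ℤ) else -1) else 0) := by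
    unfold Dsum
    rw [Finset.sum_union hAB]
    rw [Finset.sum_congr rfl (fun v (hv : v ∈ A) => Finset.sum_union hAB),
        Finset.sum_congr rfl (fun v (hv : v ∈ B) => Finset.sum_union hAB),
        Finset.sum_add_distrib, Finset.sum_add_distrib]
    ring
  have h1 : (∑ v ∈ A, ∑ w ∈ A, if E v w then (if g v < g w then (1:ℤ) else -1) else 0)
      = Dsum E gA A := by
    refine Finset.sum_congr rfl fun v hv => Finset.sum_congr rfl fun w hw => ?_
    rw [hgA' v hv, hgA' w hw]
  have h4 : (∑ v ∈ B, ∑ w ∈ B, if E v w then (if g v < g w then (1:ℤ) else -1) else 0)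
      = Dsum E gB B := by
    refine Finset.sum_congr rfl fun v hv => Finset.sum_congr rfl fun w hw => ?_
    rw [hgB' v hv, hgB' w hw]
    simp
  have h2 : (∑ v ∈ A, ∑ w ∈ B, if E v w then (if g v < g w then (1:ℤ) else -1) else 0)
      = (eAB E A B : ℤ) := by
    rw [eAB_eq_sum]
    refine Finset.sum_congr rfl fun v hv => Finset.sum_congr rfl fun w hw => ?_
    by_cases hE : E v w
    · simp [hE, hlt v hv w hw]
    · simp [hE]
  have h3 : (∑ v ∈ B, ∑ w ∈ A, if E v w then (if g v < g w then (1:ℤ) else -1) else 0)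
      = -(eAB E B A : ℤ) := by
    rw [eAB_eq_sum, ← Finset.sum_neg_distrib]
    refine Finset.sum_congr rfl fun v hv => ?_
    rw [← Finset.sum_neg_distrib]
    refine Finset.sum_congr rfl fun w hw => ?_
    by_cases hE : E v w
    · simp [hE, not_lt.mpr (hlt w hw v hv).le]
    · simp [hE]
  rw [hsplit, h1, h2, h3, h4]
  linarith
end Aux3

section Aux4
variable {V : Type*} [Fintype V] [DecidableEq V]
variable (E : V → V → Prop) [DecidableRel E]

lemma Dsum_main (hirr : ∀ v, ¬ E v v) (A B : Finset V) (hAB : Disjoint A B) :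
    ∀ (k : ℕ) (U : Finset V), (U \ (A ∪ B)).card = k → A ⊆ U → B ⊆ U →
    ∃ g : V → ℤ, Set.InjOn g ↑U ∧ (eAB E A B : ℤ) - (eAB E B A : ℤ) ≤ Dsum E g U := by
  intro k
  induction k with
  | zero =>
    intro U hcard hA hB
    have hsub : U ⊆ A ∪ B := by
      rw [← Finset.sdiff_eq_empty_iff_subset]
      exact Finset.card_eq_zero.mp hcard
    have hU : U = A ∪ B := le_antisymm hsub (Finset.union_subset hA hB)
    rw [hU]
    exact Dsum_base E hirr A B hAB
  | succ k ih =>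
    intro U hcard hA hB
    have hne : (U \ (A ∪ B)).Nonempty := by
      rw [← Finset.card_pos, hcard]; omega
    obtain ⟨c, hc⟩ := hne
    rw [Finset.mem_sdiff] at hc
    obtain ⟨hcU, hcAB⟩ := hc
    set U' : Finset V := U.erase c with hU'
    have hcU' : c ∉ U' := Finset.notMem_erase c U
    have hA' : A ⊆ U' := fun x hx => Finset.mem_erase.mpr
      ⟨fun h => hcAB (h ▸ Finset.mem_union_left B hx), hA hx⟩
    have hB' : B ⊆ U' := fun x hx => Finset.mem_erase.mpr
      ⟨fun h => hcAB (h ▸ Finset.mem_union_right A hx), hB hx⟩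
    have hcard' : (U' \ (A ∪ B)).card = k := by
      have : U' \ (A ∪ B) = (U \ (A ∪ B)).erase c := by
        ext x
        simp only [hU', Finset.mem_sdiff, Finset.mem_erase]
        tauto
      rw [this, Finset.card_erase_of_mem (Finset.mem_sdiff.mpr ⟨hcU, hcAB⟩), hcard]
      omega
    obtain ⟨g, hginj, hgD⟩ := ih U' hcard' hA' hB'
    set K : ℤ := 1 + ∑ v ∈ U', |g v| with hK
    have hbd : ∀ v ∈ U', -K < g v ∧ g v < K := by
      intro v hv
      have h1 : |g v| ≤ ∑ v ∈ U', |g v| :=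
        Finset.single_le_sum (fun i _ => abs_nonneg (g i)) hv
      constructor
      · have := neg_abs_le (g v); linarith
      · have := le_abs_self (g v); linarith
    set out : ℤ := ∑ w ∈ U', (if E c w then (1:ℤ) else 0) with hout
    set inn : ℤ := ∑ v ∈ U', (if E v c then (1:ℤ) else 0) with hinn
    set val : ℤ := if 0 ≤ out - inn then -K else K with hval
    set g' : V → ℤ := Function.update g c val with hg'
    have hg'c : g' c = val := Function.update_self c val g
    have hg'v : ∀ v ∈ U', g' v = g v := fun v hv =>
      Function.update_of_ne (Finset.mem_erase.mp hv).1 val g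
    have hvalne : ∀ v ∈ U', g v ≠ val := by
      intro v hv
      obtain ⟨h1, h2⟩ := hbd v hv
      rw [hval]
      split <;> intro h <;> omega
    have hinj : Set.InjOn g' ↑U := by
      intro x hx y hy hxy
      simp only [Finset.mem_coe] at hx hy
      by_cases hxc : x = c <;> by_cases hyc : y = c
      · rw [hxc, hyc]
      · have hyU' : y ∈ U' := Finset.mem_erase.mpr ⟨hyc, hy⟩
        rw [hxc, hg'c, hg'v y hyU'] at hxy
        exact absurd hxy.symm (hvalne y hyU')
      · have hxU' : x ∈ U' := Finset.mem_erase.mpr ⟨hxc, hx⟩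
        rw [hyc, hg'c, hg'v x hxU'] at hxy
        exact absurd hxy (hvalne x hxU')
      · have hxU' : x ∈ U' := Finset.mem_erase.mpr ⟨hxc, hx⟩
        have hyU' : y ∈ U' := Finset.mem_erase.mpr ⟨hyc, hy⟩
        rw [hg'v x hxU', hg'v y hyU'] at hxy
        exact hginj hxU' hyU' hxy
    have hUins : U = insert c U' := (Finset.insert_erase hcU).symm
    have key : Dsum E g' U =
        (∑ w ∈ U', if E c w then (if g' c < g' w then (1:ℤ) else -1) else 0)
        + ((∑ v ∈ U', if E v c then (if g' v < g' c then (1:ℤ) else -1) else 0)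
        + Dsum E g U') := by
      rw [Dsum, hUins, Finset.sum_insert hcU', Finset.sum_insert hcU']
      have hcc : (if E c c then (if g' c < g' c then (1:ℤ) else -1) else 0) = 0 := by
        simp [hirr c]
      rw [hcc, zero_add]
      congr 1
      rw [Finset.sum_congr rfl (fun v (hv : v ∈ U') => Finset.sum_insert hcU'),
          Finset.sum_add_distrib]
      congr 1
      rw [Dsum]
      refine Finset.sum_congr rfl fun v hv => Finset.sum_congr rfl fun w hw => ?_
      rw [hg'v v hv, hg'v w hw]
    refine ⟨g', hinj, ?_⟩
    by_cases hs : 0 ≤ out - inn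
    · have hvalK : val = -K := by rw [hval, if_pos hs]
      have e1 : (∑ w ∈ U', if E c w then (if g' c < g' w then (1:ℤ) else -1) else 0) = out := by
        rw [hout]
        refine Finset.sum_congr rfl fun w hw => ?_
        have : g' c < g' w := by
          rw [hg'c, hvalK, hg'v w hw]; exact (hbd w hw).1
        simp [this]
      have e2 : (∑ v ∈ U', if E v c then (if g' v < g' c then (1:ℤ) else -1) else 0) = -inn := by
        rw [hinn, ← Finset.sum_neg_distrib]
        refine Finset.sum_congr rfl fun v hv => ?_
        have : ¬ (g' v < g' c) := by
          rw [hg'c, hvalK, hg'v v hv]; exact not_lt.mpr (hbd v hv).1.le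
        simp only [this, if_false]
        split <;> ring
      rw [key, e1, e2]
      linarith
    · have hvalK : val = K := by rw [hval, if_neg hs]
      have e1 : (∑ w ∈ U', if E c w then (if g' c < g' w then (1:ℤ) else -1) else 0) = -out := by
        rw [hout, ← Finset.sum_neg_distrib]
        refine Finset.sum_congr rfl fun w hw => ?_
        have : ¬ (g' c < g' w) := by
          rw [hg'c, hvalK, hg'v w hw]; exact not_lt.mpr (hbd w hw).2.le
        simp only [this, if_false]
        split <;> ring
      have e2 : (∑ v ∈ U', if E v c then (if g' v < g' c then (1:ℤ) else -1) else 0) = inn := by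
        rw [hinn]
        refine Finset.sum_congr rfl fun v hv => ?_
        have : g' v < g' c := by
          rw [hg'c, hvalK, hg'v v hv]; exact (hbd v hv).2
        simp [this]
      rw [key, e1, e2]
      linarith
end Aux4

section Aux5
variable {V : Type*} [Fintype V] [DecidableEq V]

lemma exists_order_equiv (g : V → ℤ) (hg : Function.Injective g) :
    ∃ ρ : V ≃ Fin (Fintype.card V), ∀ v w, ρ v < ρ w ↔ g v < g w := by
  classical
  set s : Finset ℤ := Finset.univ.image g with hs
  have hcard : s.card = Fintype.card V := by
    rw [hs, Finset.card_image_of_injective _ hg, Finset.card_univ]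
  set e1 : Fin (Fintype.card V) ≃o {x // x ∈ s} := s.orderIsoOfFin hcard with he1
  have hmem : ∀ v : V, g v ∈ s := fun v => Finset.mem_image_of_mem g (Finset.mem_univ v)
  set f : V → Fin (Fintype.card V) := fun v => e1.symm ⟨g v, hmem v⟩ with hf
  have hfinj : Function.Injective f := by
    intro a b h
    have := e1.symm.injective h
    exact hg (Subtype.mk_eq_mk.mp this)
  have hbij : Function.Bijective f :=
    (Fintype.bijective_iff_injective_and_card f).mpr ⟨hfinj, by simp⟩
  refine ⟨Equiv.ofBijective f hbij, fun v w => ?_⟩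
  show f v < f w ↔ g v < g w
  rw [hf]
  rw [e1.symm.lt_iff_lt]
  exact Subtype.mk_lt_mk

variable (E : V → V → Prop) [DecidableRel E]

lemma Dsum_eq_counts (hirr : ∀ v, ¬ E v v) (g : V → ℤ) (hg : Function.Injective g)
    (ρ : V ≃ Fin (Fintype.card V)) (hρ : ∀ v w, ρ v < ρ w ↔ g v < g w) :
    (((univ : Finset (V × V)).filter fun p => E p.1 p.2 ∧ ρ p.1 < ρ p.2).card : ℤ)
      - (((univ : Finset (V × V)).filter fun p => E p.1 p.2 ∧ ρ p.2 < ρ p.1).card : ℤ)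
      = Dsum E g univ := by
  have hF : (((univ : Finset (V × V)).filter fun p => E p.1 p.2 ∧ ρ p.1 < ρ p.2).card : ℤ)
      = ∑ v : V, ∑ w : V, if E v w ∧ g v < g w then (1:ℤ) else 0 := by
    rw [Finset.card_filter, ← Finset.univ_product_univ, Finset.sum_product]
    push_cast
    refine Finset.sum_congr rfl fun v _ => Finset.sum_congr rfl fun w _ => ?_
    by_cases h : E v w ∧ ρ v < ρ w
    · rw [if_pos h, if_pos ⟨h.1, (hρ v w).mp h.2⟩]
    · rw [if_neg h, if_neg (fun hh : E v w ∧ g v < g w => h ⟨hh.1, (hρ v w).mpr hh.2⟩)]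
  have hBk : (((univ : Finset (V × V)).filter fun p => E p.1 p.2 ∧ ρ p.2 < ρ p.1).card : ℤ)
      = ∑ v : V, ∑ w : V, if E v w ∧ g w < g v then (1:ℤ) else 0 := by
    rw [Finset.card_filter, ← Finset.univ_product_univ, Finset.sum_product]
    push_cast
    refine Finset.sum_congr rfl fun v _ => Finset.sum_congr rfl fun w _ => ?_
    by_cases h : E v w ∧ ρ w < ρ v
    · rw [if_pos h, if_pos ⟨h.1, (hρ w v).mp h.2⟩]
    · rw [if_neg h, if_neg (fun hh : E v w ∧ g w < g v => h ⟨hh.1, (hρ w v).mpr hh.2⟩)]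
  rw [hF, hBk, Dsum, ← Finset.sum_sub_distrib]
  refine Finset.sum_congr rfl fun v _ => ?_
  rw [← Finset.sum_sub_distrib]
  refine Finset.sum_congr rfl fun w _ => ?_
  by_cases hE : E v w
  · have hne : v ≠ w := fun h => hirr v (h ▸ hE)
    have hgne : g v ≠ g w := fun h => hne (hg h)
    rcases lt_trichotomy (g v) (g w) with h | h | h
    · simp [hE, h, not_lt.mpr h.le]
    · exact absurd h hgne
    · simp [hE, h, not_lt.mpr h.le]
  · simp [hE]
end Aux5

end MyAux

/-- if disjoint `A, B` achieve `τ*(G)`, then there is an ordering of the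
vertices in which forward edges exceed backward edges by at least `τ*(G)`; consequently
`β(G) ≤ (m - τ*(G))/2`. -/
theorem stmt17 {V : Type*} [Fintype V] [DecidableEq V] (E : V → V → Prop) [DecidableRel E]
    (hirr : ∀ v, ¬ E v v)
    (A B : Finset V) (hAB : Disjoint A B)
    (hach : (eAB E A B : ℤ) - (eAB E B A : ℤ) = tauStar E) :
    (∃ ρ : V ≃ Fin (Fintype.card V),
      tauStar E ≤
        (((univ : Finset (V × V)).filter fun p => E p.1 p.2 ∧ ρ p.1 < ρ p.2).card : ℤ)
          - (((univ : Finset (V × V)).filter fun p => E p.1 p.2 ∧ ρ p.2 < ρ p.1).card : ℤ))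
    ∧ (beta E : ℝ) ≤ ((edgeCount E : ℝ) - (tauStar E : ℝ)) / 2 := by
  classical
  obtain ⟨g, hginj, hgD⟩ := Dsum_main E hirr A B hAB ((univ \ (A ∪ B)).card) univ rfl
    (Finset.subset_univ A) (Finset.subset_univ B)
  have hginj' : Function.Injective g := by
    rw [Finset.coe_univ] at hginj
    exact fun a b h => hginj (Set.mem_univ a) (Set.mem_univ b) h
  obtain ⟨ρ, hρ⟩ := exists_order_equiv g hginj'
  have hDc := Dsum_eq_counts E hirr g hginj' ρ hρ
  set F : ℕ := ((univ : Finset (V × V)).filter fun p => E p.1 p.2 ∧ ρ p.1 < ρ p.2).card with hF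
  set Bk : ℕ := ((univ : Finset (V × V)).filter fun p => E p.1 p.2 ∧ ρ p.2 < ρ p.1).card with hBk
  have hmain : tauStar E ≤ (F : ℤ) - (Bk : ℤ) := by
    rw [hDc, ← hach]; exact hgD
  refine ⟨⟨ρ, hmain⟩, ?_⟩
  set S : Finset (V × V) := (univ : Finset (V × V)).filter
    (fun p => E p.1 p.2 ∧ ρ p.2 < ρ p.1) with hS
  have hFAS : IsFAS E S := by
    constructor
    · intro e he
      exact ((Finset.mem_filter.mp he).2).1
    · rintro ⟨l, hl, v, hv⟩
      have hstep : ∀ i : Fin l, ρ (v i) < ρ (v ⟨(i.1 + 1) % l, Nat.mod_lt _ hl⟩) := by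
        intro i
        obtain ⟨hE, hnS⟩ := hv i
        have hnotlt : ¬ ρ (v ⟨(i.1 + 1) % l, Nat.mod_lt _ hl⟩) < ρ (v i) := by
          intro hlt
          exact hnS (Finset.mem_filter.mpr ⟨Finset.mem_univ _, hE, hlt⟩)
        have hne : v i ≠ v ⟨(i.1 + 1) % l, Nat.mod_lt _ hl⟩ := by
          intro h
          exact hirr (v i) (h ▸ hE)
        have hρne : ρ (v i) ≠ ρ (v ⟨(i.1 + 1) % l, Nat.mod_lt _ hl⟩) :=
          fun h => hne (ρ.injective h)
        exact lt_of_le_of_ne (not_lt.mp hnotlt) hρne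
      obtain ⟨i, _, hi⟩ := Finset.exists_max_image (univ : Finset (Fin l))
        (fun i => ρ (v i)) ⟨⟨0, hl⟩, Finset.mem_univ _⟩
      exact absurd (hstep i) (not_lt.mpr (hi _ (Finset.mem_univ _)))
  have hbeta : beta E ≤ Bk := Nat.sInf_le ⟨S, hFAS, rfl⟩
  have hsplit : edgeCount E = F + Bk := by
    rw [hF, hBk, edgeCount, ← Finset.card_union_of_disjoint, Finset.filter_union_right]
    · congr 1
      apply Finset.filter_congr
      intro p _
      constructor
      · intro hE
        have hne : p.1 ≠ p.2 := fun h => hirr p.1 (h ▸ hE)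
        have hρne : ρ p.1 ≠ ρ p.2 := fun h => hne (ρ.injective h)
        rcases lt_or_gt_of_ne hρne with h | h
        · exact Or.inl ⟨hE, h⟩
        · exact Or.inr ⟨hE, h⟩
      · rintro (⟨h, _⟩ | ⟨h, _⟩) <;> exact h
    · rw [Finset.disjoint_filter]
      rintro p _ ⟨hE, hlt⟩ ⟨_, hlt'⟩
      exact absurd hlt' (not_lt.mpr hlt.le)
  have h2Bk : (2 * Bk : ℤ) ≤ (edgeCount E : ℤ) - tauStar E := by
    have : (edgeCount E : ℤ) = (F : ℤ) + Bk := by exact_mod_cast hsplit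
    linarith
  have hbR : (beta E : ℝ) ≤ (Bk : ℝ) := by exact_mod_cast hbeta
  have h2R : (2 * (Bk : ℝ)) ≤ (edgeCount E : ℝ) - (tauStar E : ℝ) := by
    exact_mod_cast h2Bk
  linarith
end
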